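/- arXiv:math/0702478 — 6 statements merged into one kernel-verified Lean document; each statement's English description precedes it below -/
import Mathlib

section
/- Let K be an infinite field, fix ℓ ≥ 1 and distinct pairs (p_k, q_k), and let γ ∈ K with γ ≠ 0. Define the polynomials P(x,y) = −∑_{k=1}^{ℓ} a_k x^{p_k+1} y^{q_k} and Q(x,y) = ∑_{k=1}^{ℓ} b_k x^{q_k} y^{p_k+1}. Then the two identities γ·Q(γ·y, x/γ) = −P(x,y) and γ·Q(x,y) = −P(γ·y, x/γ) hold for all x, y ∈ K if and only if b_k = γ^{p_k − q_k} · a_k for all k = 1,…,ℓ. -/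
open MvPolynomial

noncomputable section

/-- Index in `Fin (2*ℓ)` of the coefficient `a_k` (0-indexed position `k`). -/
def aIdx (l : ℕ) (k : Fin l) : Fin (2 * l) :=
  ⟨(k : ℕ), by have := k.isLt; omega⟩

/-- Index in `Fin (2*ℓ)` of the coefficient `b_k` (0-indexed position `2ℓ-1-k`),
    matching the ordering `(a₁,…,a_ℓ, b_ℓ,…,b₁)`. -/
def bIdx (l : ℕ) (k : Fin l) : Fin (2 * l) :=
  ⟨2 * l - 1 - (k : ℕ), by have := k.isLt; omega⟩

/-- The vector `ζ = (p₁−q₁, …, p_ℓ−q_ℓ, q_ℓ−p_ℓ, …, q₁−p₁)`. -/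
def zeta {l : ℕ} (p : Fin l → ℤ) (q : Fin l → ℕ) : Fin (2 * l) → ℤ := fun i =>
  if h : (i : ℕ) < l then p ⟨(i : ℕ), h⟩ - (q ⟨(i : ℕ), h⟩ : ℤ)
  else (q ⟨2 * l - 1 - (i : ℕ), by have := i.isLt; omega⟩ : ℤ) -
    p ⟨2 * l - 1 - (i : ℕ), by have := i.isLt; omega⟩

/-- Dot product of an integer vector with a vector of natural numbers. -/
def zdot {n : ℕ} (z : Fin n → ℤ) (v : Fin n → ℕ) : ℤ := ∑ i, z i * (v i : ℤ)

/-- Reversal (involution) of a vector: `ν̂ = (ν_{2ℓ}, …, ν₁)`. -/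
def revVec {n : ℕ} {α : Type*} (v : Fin n → α) : Fin n → α := fun i => v i.rev

/-- The monomial `[ν] = a₁^{ν₁}⋯a_ℓ^{ν_ℓ}·b_ℓ^{ν_{ℓ+1}}⋯b₁^{ν_{2ℓ}}` in the
    polynomial ring in `2ℓ` variables. -/
def monX {K : Type*} [CommSemiring K] {n : ℕ} (v : Fin n → ℕ) :
    MvPolynomial (Fin n) K :=
  ∏ i, (X i) ^ (v i)

/-- Time-reversibility of the coefficient vector `x = (a,b)`: there is `γ ≠ 0`
    with `b_k = γ^{p_k−q_k}·a_k` for all `k`. -/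
def TimeRev {K : Type*} [Field K] {l : ℕ} (p : Fin l → ℤ) (q : Fin l → ℕ)
    (x : Fin (2 * l) → K) : Prop :=
  ∃ γ : K, γ ≠ 0 ∧ ∀ k : Fin l, x (bIdx l k) = γ ^ (p k - (q k : ℤ)) * x (aIdx l k)

/-- The Sibirsky ideal `I_S = ⟨[ν] − [ν̂] : ν ∈ M⟩`. -/
def sibirsky (K : Type*) [CommRing K] {l : ℕ} (p : Fin l → ℤ) (q : Fin l → ℕ) :
    Ideal (MvPolynomial (Fin (2 * l)) K) :=
  Ideal.span {f | ∃ v : Fin (2 * l) → ℕ,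
    zdot (zeta p q) v = 0 ∧ f = monX v - monX (revVec v)}

/-- The homomorphism `ψ₀ : K[a₁,…,a_ℓ,b_ℓ,…,b₁] → K(γ,t₁,…,t_ℓ)`,
    `a_k ↦ t_k`, `b_k ↦ γ^{p_k−q_k}·t_k`; here `γ` is the image of `X 0` and
    `t_k` the image of `X k.succ` in the fraction field of `K[X₀,…,X_ℓ]`. -/
def psi0 {K : Type*} [Field K] {l : ℕ} (p : Fin l → ℤ) (q : Fin l → ℕ) :
    MvPolynomial (Fin (2 * l)) K →ₐ[K] FractionRing (MvPolynomial (Fin (l + 1)) K) :=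
  aeval fun i =>
    if h : (i : ℕ) < l then
      algebraMap (MvPolynomial (Fin (l + 1)) K)
        (FractionRing (MvPolynomial (Fin (l + 1)) K)) (X (Fin.succ ⟨(i : ℕ), h⟩))
    else
      (algebraMap (MvPolynomial (Fin (l + 1)) K)
          (FractionRing (MvPolynomial (Fin (l + 1)) K)) (X 0)) ^
        (p ⟨2 * l - 1 - (i : ℕ), by have := i.isLt; omega⟩ -
          (q ⟨2 * l - 1 - (i : ℕ), by have := i.isLt; omega⟩ : ℤ)) *
      algebraMap (MvPolynomial (Fin (l + 1)) K)
        (FractionRing (MvPolynomial (Fin (l + 1)) K))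
        (X (Fin.succ ⟨2 * l - 1 - (i : ℕ), by have := i.isLt; omega⟩))

/-- The linear map `U_η`, multiplying the coordinate `a_k` by `η^{q_k−p_k}` and the
    coordinate `b_k` by `η^{p_k−q_k}`. -/
def Ueta {K : Type*} [Field K] {l : ℕ} (p : Fin l → ℤ) (q : Fin l → ℕ) (η : K)
    (x : Fin (2 * l) → K) : Fin (2 * l) → K := fun i =>
  if h : (i : ℕ) < l then η ^ ((q ⟨(i : ℕ), h⟩ : ℤ) - p ⟨(i : ℕ), h⟩) * x i
  else η ^ (p ⟨2 * l - 1 - (i : ℕ), by have := i.isLt; omega⟩ -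
    (q ⟨2 * l - 1 - (i : ℕ), by have := i.isLt; omega⟩ : ℤ)) * x i

/-- The orbit of `x` under the group `{U_η : η ≠ 0}`. -/
def orbitU {K : Type*} [Field K] {l : ℕ} (p : Fin l → ℤ) (q : Fin l → ℕ)
    (x : Fin (2 * l) → K) : Set (Fin (2 * l) → K) :=
  {y | ∃ η : K, η ≠ 0 ∧ y = Ueta p q η x}

lemma aux_coeff {K : Type*} [Field K] [Infinite K] {l : ℕ} (m n : Fin l → ℕ)
    (hinj : Function.Injective fun k => (m k, n k)) (c : Fin l → K)
    (h : ∀ x y : K, ∑ k, c k * x ^ m k * y ^ n k = 0) : ∀ k, c k = 0 := by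
  classical
  set F : MvPolynomial (Fin 2) K :=
    ∑ k, MvPolynomial.monomial (Finsupp.single 0 (m k) + Finsupp.single 1 (n k)) (c k) with hF
  have hev : ∀ z : Fin 2 → K, MvPolynomial.eval z F = 0 := by
    intro z
    have := h (z 0) (z 1)
    rw [hF, map_sum]
    simpa [MvPolynomial.eval_monomial, Finsupp.prod_add_index, pow_add, mul_assoc,
      Finsupp.prod_single_index] using this
  have hF0 : F = 0 := by
    apply MvPolynomial.funext
    intro z; simpa using hev z
  intro k
  have := congrArg (MvPolynomial.coeff (Finsupp.single 0 (m k) + Finsupp.single 1 (n k))) hF0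
  rw [hF, MvPolynomial.coeff_sum] at this
  simp only [MvPolynomial.coeff_monomial, MvPolynomial.coeff_zero] at this
  rw [Finset.sum_eq_single k] at this
  · simpa using this
  · intro j _ hjk
    rw [if_neg]
    intro hEq
    apply hjk
    apply hinj
    have h0 := congrArg (fun f : Fin 2 →₀ ℕ => f 0) hEq
    have h1 := congrArg (fun f : Fin 2 →₀ ℕ => f 1) hEq
    simp [Finsupp.single_apply] at h0 h1
    simp [h0, h1]
  · intro hk; exact absurd (Finset.mem_univ k) hk

lemma zpow_key {K : Type*} [Field K] {γ : K} (hγ : γ ≠ 0) (p : ℤ) (q m : ℕ)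
    (hm : (m : ℤ) = p + 1) :
    γ ^ (p - (q : ℤ)) * (γ * γ ^ q) = γ ^ m := by
  have h1 : γ * γ ^ q = γ ^ (1 + (q : ℤ)) := by
    rw [zpow_add₀ hγ, zpow_one, zpow_natCast]
  rw [h1, ← zpow_add₀ hγ, ← zpow_natCast γ m]
  congr 1
  omega

theorem stmt0 {K : Type*} [Field K] [Infinite K] {l : ℕ} (hl : 0 < l) (p : Fin l → ℤ) (q : Fin l → ℕ)
    (hp : ∀ k, -1 ≤ p k) (hpq : ∀ k, 0 ≤ p k + (q k : ℤ))
    (hdist : Function.Injective fun k => (p k, q k))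
    (a b : Fin l → K) (γ : K) (hγ : γ ≠ 0) (P Q : K → K → K)
    (hP : ∀ x y : K, P x y = -∑ k, a k * x ^ (p k + 1).toNat * y ^ (q k))
    (hQ : ∀ x y : K, Q x y = ∑ k, b k * x ^ (q k) * y ^ (p k + 1).toNat) :
    ((∀ x y : K, γ * Q (γ * y) (x / γ) = -(P x y)) ∧
      (∀ x y : K, γ * Q x y = -(P (γ * y) (x / γ)))) ↔
      ∀ k, b k = γ ^ (p k - (q k : ℤ)) * a k := by
  classical
  set m : Fin l → ℕ := fun k => (p k + 1).toNat with hmdef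
  have hm : ∀ k, (m k : ℤ) = p k + 1 := fun k =>
    Int.toNat_of_nonneg (by have := hp k; omega)
  have hγm : ∀ k : Fin l, γ ^ m k ≠ 0 := fun k => pow_ne_zero _ hγ
  have hkey : ∀ k, γ ^ (p k - (q k : ℤ)) * (γ * γ ^ q k) = γ ^ m k := fun k =>
    zpow_key hγ (p k) (q k) (m k) (hm k)
  constructor
  · rintro ⟨h1, -⟩
    set c : Fin l → K := fun k => γ * b k * γ ^ q k * (γ⁻¹) ^ m k - a k with hc
    have hinj2 : Function.Injective fun k => (m k, q k) := by
      intro j k hjk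
      apply hdist
      simp only [Prod.mk.injEq] at hjk ⊢
      have h1' := hm j
      have h2' := hm k
      exact ⟨by omega, hjk.2⟩
    have hsum : ∀ x y : K, ∑ k, c k * x ^ m k * y ^ q k = 0 := by
      intro x y
      have h := h1 x y
      have : ∑ k, c k * x ^ m k * y ^ q k =
          γ * (∑ k, b k * (γ * y) ^ q k * (x / γ) ^ m k) -
            ∑ k, a k * x ^ m k * y ^ q k := by
        rw [Finset.mul_sum, ← Finset.sum_sub_distrib]
        apply Finset.sum_congr rfl
        intro k _
        rw [hc]
        field_simp
        ring
      rw [this, ← hQ, sub_eq_zero, h, hP, neg_neg]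
    have hc0 := aux_coeff m q hinj2 c hsum
    intro k
    have := hc0 k
    rw [hc] at this
    have heq : γ * b k * γ ^ q k * (γ⁻¹) ^ m k = a k := by
      have := sub_eq_zero.mp this
      exact this
    have hk := hkey k
    have h2 : γ * b k * γ ^ q k * (γ ^ m k)⁻¹ = a k := by
      rw [← inv_pow]; exact heq
    have hne : γ ^ (p k - (q k : ℤ)) * (γ * γ ^ q k) ≠ 0 :=
      mul_ne_zero (zpow_ne_zero _ hγ) (mul_ne_zero hγ (pow_ne_zero _ hγ))
    rw [← h2, ← hk]
    field_simp
  · intro h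
    constructor
    · intro x y
      rw [hQ, hP, neg_neg, Finset.mul_sum]
      apply Finset.sum_congr rfl
      intro k _
      rw [h k]
      have hk := hkey k
      have hk' : γ ^ (p k - (q k : ℤ)) * (γ * γ ^ q k) = γ ^ (p k + 1).toNat := hk
      rw [mul_pow, div_pow, ← hk']
      field_simp
    · intro x y
      rw [hQ, hP, neg_neg, Finset.mul_sum]
      apply Finset.sum_congr rfl
      intro k _
      rw [h k]
      have hk := hkey k
      have hk' : γ ^ (p k - (q k : ℤ)) * (γ * γ ^ q k) = γ ^ (p k + 1).toNat := hk
      rw [mul_pow, div_pow, ← hk']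
      field_simp
end
end

section
/- Assume there exists k₀ ∈ {1,…,ℓ} with p_{k₀} ≠ q_{k₀}. Then the inclusion R ⊆ V(I_S) is strict: the point of ℂ^{2ℓ} whose coordinate b_{k₀} equals 1 and all of whose other coordinates equal 0 belongs to V(I_S) but is not time-reversible; in particular R ⊊ V(I_S). -/
open MvPolynomial

noncomputable section

/- ===== auxiliary lemmas ===== -/

lemma eval_monX {K : Type*} [CommSemiring K] {n : ℕ} (x : Fin n → K) (v : Fin n → ℕ) :
    eval x (monX v) = ∏ i, x i ^ v i := by
  simp [monX]

lemma prod_zpow_sum {K : Type*} [Field K] {γ : K} (hγ : γ ≠ 0) {n : ℕ} (c : Fin n → ℤ) :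
    ∏ i, γ ^ c i = γ ^ (∑ i, c i) := by
  classical
  induction (Finset.univ : Finset (Fin n)) using Finset.induction with
  | empty => simp
  | insert _ _ h ih => rw [Finset.prod_insert h, Finset.sum_insert h, zpow_add₀ hγ, ih]

lemma rev_bIdx {l : ℕ} (k : Fin l) : Fin.rev (bIdx l k) = aIdx l k := by
  have := k.isLt
  ext
  simp [Fin.val_rev, bIdx, aIdx]
  omega

lemma rev_aIdx {l : ℕ} (k : Fin l) : Fin.rev (aIdx l k) = bIdx l k := by
  rw [← rev_bIdx k, Fin.rev_rev]

lemma zeta_bIdx {l : ℕ} (p : Fin l → ℤ) (q : Fin l → ℕ) (k : Fin l) :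
    zeta p q (bIdx l k) = (q k : ℤ) - p k := by
  have hk := k.isLt
  have h : ¬ ((bIdx l k : ℕ) < l) := by simp [bIdx]; omega
  have h2 : 2 * l - 1 - (bIdx l k : ℕ) = (k : ℕ) := by simp [bIdx]; omega
  simp only [zeta, dif_neg h, h2, Fin.eta]

lemma zeta_aIdx {l : ℕ} (p : Fin l → ℤ) (q : Fin l → ℕ) (k : Fin l) :
    zeta p q (aIdx l k) = p k - (q k : ℤ) := by
  have hk := k.isLt
  rw [zeta, dif_pos (by simpa [aIdx] using hk)]
  simp only [aIdx, Fin.eta]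

lemma rev_rel {l : ℕ} (p : Fin l → ℤ) (q : Fin l → ℕ) {γ : ℂ} (hγ : γ ≠ 0)
    (x : Fin (2 * l) → ℂ)
    (hb : ∀ k, x (bIdx l k) = γ ^ (p k - (q k : ℤ)) * x (aIdx l k)) :
    ∀ i : Fin (2 * l), x (Fin.rev i) = γ ^ (zeta p q i) * x i := by
  intro i
  by_cases h : (i : ℕ) < l
  · have hi : i = aIdx l ⟨(i : ℕ), h⟩ := by ext; simp [aIdx]
    rw [hi, rev_aIdx, hb, zeta_aIdx]
  · have hil := i.isLt
    set k : Fin l := ⟨2 * l - 1 - (i : ℕ), by omega⟩ with hk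
    have hib : i = bIdx l k := by ext; simp [bIdx, hk]; omega
    have hrev : Fin.rev i = aIdx l k := by rw [hib, rev_bIdx]
    rw [hrev, hib, zeta_bIdx, hb, ← mul_assoc, ← zpow_add₀ hγ]
    ring_nf
    simp

lemma eval_gen_sub {l : ℕ} (p : Fin l → ℤ) (q : Fin l → ℕ) {x : Fin (2 * l) → ℂ}
    (hx : ∀ v : Fin (2 * l) → ℕ, zdot (zeta p q) v = 0 →
      eval x (monX v) = eval x (monX (revVec v))) :
    ∀ f ∈ sibirsky ℂ p q, eval x f = 0 := by
  have hle : sibirsky ℂ p q ≤ RingHom.ker (eval x) := by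
    rw [sibirsky, Ideal.span_le]
    rintro f ⟨v, hv, rfl⟩
    simp [RingHom.mem_ker, hx v hv]
  exact fun f hf => hle hf

lemma timeRev_subset {l : ℕ} (p : Fin l → ℤ) (q : Fin l → ℕ) (x : Fin (2 * l) → ℂ)
    (hx : TimeRev p q x) : ∀ f ∈ sibirsky ℂ p q, eval x f = 0 := by
  obtain ⟨γ, hγ, hb⟩ := hx
  apply eval_gen_sub p q
  intro v hv
  rw [eval_monX, eval_monX]
  have h1 : ∏ i, x i ^ revVec v i = ∏ i, x (Fin.rev i) ^ v i := by
    refine Fintype.prod_equiv (Fin.revPerm) _ _ (fun i => ?_)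
    simp [revVec, Fin.rev_rev]
  rw [h1]
  have h2 : ∀ i : Fin (2 * l), x (Fin.rev i) ^ v i = γ ^ (zeta p q i * (v i : ℤ)) * x i ^ v i := by
    intro i
    rw [rev_rel p q hγ x hb, mul_pow, ← zpow_natCast (γ ^ (zeta p q i)), ← zpow_mul]
  simp_rw [h2]
  rw [Finset.prod_mul_distrib, prod_zpow_sum hγ]
  have : ∑ i, zeta p q i * (v i : ℤ) = 0 := hv
  rw [this, zpow_zero, one_mul]

theorem stmt4 {l : ℕ} (hl : 0 < l) (p : Fin l → ℤ) (q : Fin l → ℕ)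
    (hp : ∀ k, -1 ≤ p k) (hpq : ∀ k, 0 ≤ p k + (q k : ℤ))
    (hdist : Function.Injective fun k => (p k, q k))
    (k₀ : Fin l) (hk₀ : p k₀ ≠ (q k₀ : ℤ))
    (e : Fin (2 * l) → ℂ) (he : e = fun i => if i = bIdx l k₀ then 1 else 0) :
    e ∈ {x : Fin (2 * l) → ℂ | ∀ f ∈ sibirsky ℂ p q, eval x f = 0} ∧
    ¬ TimeRev p q e ∧
    {x : Fin (2 * l) → ℂ | TimeRev p q x} ⊂
      {x : Fin (2 * l) → ℂ | ∀ f ∈ sibirsky ℂ p q, eval x f = 0} := by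
  have hk := k₀.isLt
  have hab : aIdx l k₀ ≠ bIdx l k₀ := by
    intro h
    have := congrArg Fin.val h
    simp [aIdx, bIdx] at this
    omega
  have heval : ∀ i, e i = if i = bIdx l k₀ then 1 else 0 := by
    intro i; rw [he]
  have hmem : ∀ f ∈ sibirsky ℂ p q, eval e f = 0 := by
    apply eval_gen_sub p q
    intro v hv
    by_cases hA : ∀ i, i ≠ bIdx l k₀ → v i = 0
    · have hsum : zdot (zeta p q) v = zeta p q (bIdx l k₀) * (v (bIdx l k₀) : ℤ) := by
        rw [zdot]
        exact Finset.sum_eq_single _ (fun i _ hi => by rw [hA i hi]; simp) (by simp)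
      rw [hv] at hsum
      have hz : zeta p q (bIdx l k₀) ≠ 0 := by rw [zeta_bIdx]; omega
      have hv0 : ∀ i, v i = 0 := by
        intro i
        by_cases hi : i = bIdx l k₀
        · subst hi
          rcases mul_eq_zero.mp hsum.symm with h | h
          · exact absurd h hz
          · exact_mod_cast h
        · exact hA i hi
      simp [eval_monX, revVec, hv0]
    · push_neg at hA
      obtain ⟨i, hi, hvi⟩ := hA
      by_cases hB : ∀ j, j ≠ aIdx l k₀ → v j = 0
      · have hsum : zdot (zeta p q) v = zeta p q (aIdx l k₀) * (v (aIdx l k₀) : ℤ) := by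
          rw [zdot]
          exact Finset.sum_eq_single _ (fun j _ hj => by rw [hB j hj]; simp) (by simp)
        rw [hv] at hsum
        have hz : zeta p q (aIdx l k₀) ≠ 0 := by rw [zeta_aIdx]; omega
        have hv0 : ∀ j, v j = 0 := by
          intro j
          by_cases hj : j = aIdx l k₀
          · subst hj
            rcases mul_eq_zero.mp hsum.symm with h | h
            · exact absurd h hz
            · exact_mod_cast h
          · exact hB j hj
        simp [eval_monX, revVec, hv0]
      · push_neg at hB
        obtain ⟨j, hj, hvj⟩ := hB
        rw [eval_monX, eval_monX]
        have P1 : ∏ i, e i ^ v i = 0 := by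
          refine Finset.prod_eq_zero (Finset.mem_univ i) ?_
          rw [heval i, if_neg hi, zero_pow hvi]
        have P2 : ∏ i, e i ^ revVec v i = 0 := by
          refine Finset.prod_eq_zero (Finset.mem_univ (Fin.rev j)) ?_
          have hne : Fin.rev j ≠ bIdx l k₀ := by
            intro h
            apply hj
            rw [← Fin.rev_rev j, h, rev_bIdx]
          rw [heval, if_neg hne]
          have : revVec v (Fin.rev j) = v j := by simp [revVec, Fin.rev_rev]
          rw [this, zero_pow hvj]
        rw [P1, P2]
  have hnotrev : ¬ TimeRev p q e := by
    rintro ⟨γ, hγ, hb⟩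
    have h1 := hb k₀
    rw [heval, heval, if_pos rfl, if_neg hab, mul_zero] at h1
    exact one_ne_zero h1
  refine ⟨hmem, hnotrev, ?_⟩
  rw [Set.ssubset_def]
  exact ⟨fun x hx => timeRev_subset p q x hx, fun h => hnotrev (h hmem)⟩
end
end

section
/- Let K be a field. The Sibirsky ideal I_S equals the kernel of ψ₀, i.e., I_S = ker ψ₀ as ideals of the polynomial ring K[a₁,…,a_ℓ,b_ℓ,…,b₁]. -/
open MvPolynomial

noncomputable section

namespace Aux

def e2 (l : ℕ) : Fin l ⊕ Fin l ≃ Fin (2 * l) where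
  toFun := Sum.elim (aIdx l) (bIdx l)
  invFun i := if h : (i : ℕ) < l then .inl ⟨i, h⟩
    else .inr ⟨2 * l - 1 - (i : ℕ), by have := i.isLt; omega⟩
  left_inv x := by
    cases x with
    | inl k => simp [aIdx, k.isLt]
    | inr k =>
      have hk := k.isLt
      simp only [Sum.elim_inr, bIdx]
      split_ifs with h
      · omega
      congr 1
      exact (dif_neg h).trans (congrArg Sum.inr (Fin.ext (by simp only [Fin.val_mk]; omega)))
  right_inv i := by
    by_cases h : (i : ℕ) < l
    · simp [h, aIdx]
    · have := i.isLt
      simp only [dif_neg h, Sum.elim_inr, bIdx]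
      exact Fin.ext (by simp; omega)

lemma prod_split {l : ℕ} {M : Type*} [CommMonoid M] (f : Fin (2 * l) → M) :
    ∏ i, f i = (∏ k, f (aIdx l k)) * ∏ k, f (bIdx l k) := by
  rw [← (e2 l).prod_comp f]
  rw [Fintype.prod_sum_type]
  rfl

lemma sum_split {l : ℕ} {M : Type*} [AddCommMonoid M] (f : Fin (2 * l) → M) :
    ∑ i, f i = (∑ k, f (aIdx l k)) + ∑ k, f (bIdx l k) := by
  rw [← (e2 l).sum_comp f]
  rw [Fintype.sum_sum_type]
  rfl

lemma rev_aIdx {l : ℕ} (k : Fin l) : (aIdx l k).rev = bIdx l k := by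
  have := k.isLt
  exact Fin.ext (by simp [aIdx, bIdx, Fin.val_rev]; omega)

lemma rev_bIdx {l : ℕ} (k : Fin l) : (bIdx l k).rev = aIdx l k := by
  have := k.isLt
  exact Fin.ext (by simp [aIdx, bIdx, Fin.val_rev]; omega)


lemma bIdx_back {l : ℕ} (k : Fin l) : 2 * l - 1 - ((bIdx l k : ℕ)) = k := by
  have := k.isLt; simp [bIdx]; omega


lemma bIdx_not_lt {l : ℕ} (k : Fin l) : ¬ ((bIdx l k : ℕ) < l) := by
  have := k.isLt; simp [bIdx]; omega

lemma aIdx_lt {l : ℕ} (k : Fin l) : ((aIdx l k : ℕ)) < l := k.isLt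

lemma zeta_aIdx {l : ℕ} (p : Fin l → ℤ) (q : Fin l → ℕ) (k : Fin l) :
    zeta p q (aIdx l k) = p k - q k := by
  rw [zeta, dif_pos (aIdx_lt k)]
  have he : (⟨((aIdx l k : ℕ)), aIdx_lt k⟩ : Fin l) = k := Fin.ext rfl
  rw [he]

lemma zeta_bIdx {l : ℕ} (p : Fin l → ℤ) (q : Fin l → ℕ) (k : Fin l) :
    zeta p q (bIdx l k) = (q k : ℤ) - p k := by
  have := k.isLt
  rw [zeta, dif_neg (bIdx_not_lt k)]
  have he : ∀ h, (⟨2 * l - 1 - ((bIdx l k : ℕ)), h⟩ : Fin l) = k := fun h =>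
    Fin.ext (by show 2 * l - 1 - (2 * l - 1 - (k : ℕ)) = (k : ℕ); omega)
  rw [he]

-- monX lemmas
lemma monX_eq_monomial {K : Type*} [CommSemiring K] {n : ℕ} (v : Fin n → ℕ) :
    (monX v : MvPolynomial (Fin n) K) = monomial (Finsupp.equivFunOnFinite.symm v) 1 := by
  rw [monomial_eq, C_1, one_mul, Finsupp.prod_pow]
  rfl

lemma monX_inj {K : Type*} [CommSemiring K] [Nontrivial K] {n : ℕ} {u v : Fin n → ℕ}
    (h : (monX u : MvPolynomial (Fin n) K) = monX v) : u = v := by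
  have h2 := congrArg (coeff (Finsupp.equivFunOnFinite.symm u)) h
  rw [monX_eq_monomial, monX_eq_monomial, coeff_monomial, coeff_monomial, if_pos rfl] at h2
  split_ifs at h2 with hh
  · exact (Finsupp.equivFunOnFinite.symm.injective hh.symm)
  · exact absurd h2 one_ne_zero

lemma monX_add {K : Type*} [CommSemiring K] {n : ℕ} (u v : Fin n → ℕ) :
    (monX (u + v) : MvPolynomial (Fin n) K) = monX u * monX v := by
  simp [monX, pow_add, Finset.prod_mul_distrib]

lemma zpow_sum₀ {G₀ : Type*} [CommGroupWithZero G₀] {a : G₀} (ha : a ≠ 0)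
    {ι : Type*} (s : Finset ι) (f : ι → ℤ) :
    a ^ (∑ i ∈ s, f i) = ∏ i ∈ s, a ^ f i := by
  classical
  induction s using Finset.induction with
  | empty => simp
  | insert x s hx ih => simp [Finset.sum_insert hx, Finset.prod_insert hx,
      zpow_add₀ ha, ih]

variable {K : Type*} [Field K] {l : ℕ}

/-- image of `γ` -/
def Gm (K : Type*) [Field K] (l : ℕ) : FractionRing (MvPolynomial (Fin (l + 1)) K) :=
  algebraMap (MvPolynomial (Fin (l + 1)) K) _ (X 0)

/-- image of `t_k` -/
def Tm (K : Type*) [Field K] {l : ℕ} (k : Fin l) : FractionRing (MvPolynomial (Fin (l + 1)) K) :=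
  algebraMap (MvPolynomial (Fin (l + 1)) K) _ (X k.succ)

lemma algebraMap_injective :
    Function.Injective (algebraMap (MvPolynomial (Fin (l + 1)) K)
      (FractionRing (MvPolynomial (Fin (l + 1)) K))) :=
  IsFractionRing.injective _ _

lemma Gm_ne_zero : Gm K l ≠ 0 := by
  intro h
  have h2 : (X 0 : MvPolynomial (Fin (l + 1)) K) = 0 :=
    algebraMap_injective (by simpa [Gm] using h)
  exact MvPolynomial.X_ne_zero 0 h2

lemma psi0_X_aIdx (p : Fin l → ℤ) (q : Fin l → ℕ) (k : Fin l) :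
    psi0 (K := K) p q (X (aIdx l k)) = Tm K k := by
  rw [psi0, aeval_X, dif_pos (aIdx_lt k)]
  have he : (⟨((aIdx l k : ℕ)), aIdx_lt k⟩ : Fin l) = k := Fin.ext rfl
  rw [he, Tm]

lemma psi0_X_bIdx (p : Fin l → ℤ) (q : Fin l → ℕ) (k : Fin l) :
    psi0 (K := K) p q (X (bIdx l k)) = Gm K l ^ (p k - (q k : ℤ)) * Tm K k := by
  rw [psi0, aeval_X, dif_neg (bIdx_not_lt k)]
  have he : ∀ h, (⟨2 * l - 1 - ((bIdx l k : ℕ)), h⟩ : Fin l) = k := fun h =>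
    Fin.ext (by show 2 * l - 1 - (2 * l - 1 - (k : ℕ)) = (k : ℕ); omega)
  rw [he]; rfl

/-- γ-exponent of ψ₀ of a monomial -/
def eg (p : Fin l → ℤ) (q : Fin l → ℕ) (v : Fin (2 * l) → ℕ) : ℤ :=
  ∑ k, (p k - (q k : ℤ)) * v (bIdx l k)

/-- t-exponents of ψ₀ of a monomial -/
def sE (v : Fin (2 * l) → ℕ) (k : Fin l) : ℕ := v (aIdx l k) + v (bIdx l k)

lemma psi0_monX (p : Fin l → ℤ) (q : Fin l → ℕ) (v : Fin (2 * l) → ℕ) :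
    psi0 (K := K) p q (monX v) = Gm K l ^ eg p q v * ∏ k, Tm K k ^ (sE v k) := by
  rw [monX, map_prod, prod_split]
  have ha : ∀ k : Fin l, psi0 (K := K) p q (X (aIdx l k) ^ v (aIdx l k)) =
      Tm K k ^ v (aIdx l k) := by
    intro k; rw [map_pow, psi0_X_aIdx]
  have hb : ∀ k : Fin l, psi0 (K := K) p q (X (bIdx l k) ^ v (bIdx l k)) =
      Gm K l ^ ((p k - (q k : ℤ)) * v (bIdx l k)) * Tm K k ^ v (bIdx l k) := by
    intro k
    rw [map_pow, psi0_X_bIdx, mul_pow, ← zpow_natCast (Gm K l ^ (p k - (q k : ℤ))),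
      ← zpow_mul]
  rw [Finset.prod_congr rfl (fun k _ => ha k), Finset.prod_congr rfl (fun k _ => hb k),
    Finset.prod_mul_distrib, ← zpow_sum₀ Gm_ne_zero]
  rw [show (∑ k, (p k - (q k : ℤ)) * v (bIdx l k)) = eg p q v from rfl]
  rw [mul_left_comm, ← Finset.prod_mul_distrib]
  exact congrArg _ (Finset.prod_congr rfl fun k _ => (pow_add (Tm K k) _ _).symm)

lemma key_mono (A : ℕ) (t : Fin l → ℕ) :
    Gm K l ^ A * ∏ k, Tm K k ^ t k =
      algebraMap (MvPolynomial (Fin (l + 1)) K) (FractionRing (MvPolynomial (Fin (l + 1)) K))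
        (monX (Fin.cons A t)) := by
  rw [monX, Fin.prod_univ_succ, map_mul, map_prod]
  simp only [Fin.cons_zero, Fin.cons_succ, map_pow]
  rfl

set_option maxHeartbeats 2000000 in
lemma mono_inj {m m' : ℤ} {s s' : Fin l → ℕ}
    (h : Gm K l ^ m * ∏ k, Tm K k ^ s k = Gm K l ^ m' * ∏ k, Tm K k ^ s' k) :
    m = m' ∧ s = s' := by
  set c : ℕ := (-m).toNat + (-m').toNat with hc
  have hm : 0 ≤ (c : ℤ) + m := by
    have h1 := Int.self_le_toNat (-m); have h2 := Int.self_le_toNat (-m'); omega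
  have hm' : 0 ≤ (c : ℤ) + m' := by
    have h1 := Int.self_le_toNat (-m); have h2 := Int.self_le_toNat (-m'); omega
  have h2 : Gm K l ^ ((c : ℤ) + m) * ∏ k, Tm K k ^ s k =
      Gm K l ^ ((c : ℤ) + m') * ∏ k, Tm K k ^ s' k := by
    rw [zpow_add₀ Gm_ne_zero, zpow_add₀ Gm_ne_zero, mul_assoc, mul_assoc, h]
  rw [← Int.toNat_of_nonneg hm, ← Int.toNat_of_nonneg hm', zpow_natCast, zpow_natCast,
    key_mono, key_mono] at h2
  have h3 := monX_inj (algebraMap_injective h2)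
  have hA : ((c : ℤ) + m).toNat = ((c : ℤ) + m').toNat := congrFun h3 0
  constructor
  · omega
  · funext k
    have := congrFun h3 k.succ
    simpa [Fin.cons_succ] using this

lemma e2_symm_aIdx (k : Fin l) : (e2 l).symm (aIdx l k) = .inl k :=
  (e2 l).symm_apply_eq.mpr rfl

lemma e2_symm_bIdx (k : Fin l) : (e2 l).symm (bIdx l k) = .inr k :=
  (e2 l).symm_apply_eq.mpr rfl

lemma funext_split {α : Type*} {f g : Fin (2 * l) → α}
    (h1 : ∀ k, f (aIdx l k) = g (aIdx l k)) (h2 : ∀ k, f (bIdx l k) = g (bIdx l k)) :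
    f = g := funext fun i => by
  have hi := (e2 l).apply_symm_apply i
  rcases hcase : (e2 l).symm i with k | k <;> rw [hcase] at hi
  · rw [← hi]; exact h1 k
  · rw [← hi]; exact h2 k

lemma binomial_mem (p : Fin l → ℤ) (q : Fin l → ℕ) (a b : Fin (2 * l) → ℕ)
    (hs : ∀ k, sE a k = sE b k) (he : eg p q a = eg p q b) :
    (monX a - monX b : MvPolynomial (Fin (2 * l)) K) ∈ sibirsky K p q := by
  classical
  set ν : Fin (2 * l) → ℕ := fun i =>
    Sum.elim (fun k => a (aIdx l k) - b (aIdx l k)) (fun k => b (aIdx l k) - a (aIdx l k))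
      ((e2 l).symm i) with hν
  set w : Fin (2 * l) → ℕ := fun i => min (a i) (b i) with hw
  have hνa : ∀ k, ν (aIdx l k) = a (aIdx l k) - b (aIdx l k) := fun k => by
    rw [hν]; simp only [e2_symm_aIdx, Sum.elim_inl]
  have hνb : ∀ k, ν (bIdx l k) = b (aIdx l k) - a (aIdx l k) := fun k => by
    rw [hν]; simp only [e2_symm_bIdx, Sum.elim_inr]
  have hrel : ∀ k : Fin l, a (aIdx l k) + a (bIdx l k) = b (aIdx l k) + b (bIdx l k) := hs
  have haw : a = w + ν := by
    refine funext_split (fun k => ?_) (fun k => ?_)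
    · have := hνa k; simp only [Pi.add_apply, hw]; omega
    · have := hνb k; have := hrel k; simp only [Pi.add_apply, hw]; omega
  have hbw : b = w + revVec ν := by
    have hra : ∀ k, revVec ν (aIdx l k) = ν (bIdx l k) := fun k => by
      rw [revVec, rev_aIdx]
    have hrb : ∀ k, revVec ν (bIdx l k) = ν (aIdx l k) := fun k => by
      rw [revVec, rev_bIdx]
    refine funext_split (fun k => ?_) (fun k => ?_)
    · have := hra k; have := hνb k; simp only [Pi.add_apply, hw]; omega
    · have := hrb k; have := hνa k; have := hrel k; simp only [Pi.add_apply, hw]; omega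
  have hz : zdot (zeta p q) ν = 0 := by
    rw [zdot, sum_split, ← Finset.sum_add_distrib]
    have hper : ∀ k : Fin l, zeta p q (aIdx l k) * (ν (aIdx l k) : ℤ) +
        zeta p q (bIdx l k) * (ν (bIdx l k) : ℤ) =
        (p k - (q k : ℤ)) * ((b (bIdx l k) : ℤ) - (a (bIdx l k) : ℤ)) := by
      intro k
      rw [zeta_aIdx, zeta_bIdx, hνa, hνb]
      have h1 := hrel k
      have h2 : ((a (aIdx l k) - b (aIdx l k) : ℕ) : ℤ) - ((b (aIdx l k) - a (aIdx l k) : ℕ) : ℤ)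
          = (b (bIdx l k) : ℤ) - (a (bIdx l k) : ℤ) := by omega
      calc (p k - (q k : ℤ)) * ((a (aIdx l k) - b (aIdx l k) : ℕ) : ℤ) +
            ((q k : ℤ) - p k) * ((b (aIdx l k) - a (aIdx l k) : ℕ) : ℤ)
          = (p k - (q k : ℤ)) * (((a (aIdx l k) - b (aIdx l k) : ℕ) : ℤ)
              - ((b (aIdx l k) - a (aIdx l k) : ℕ) : ℤ)) := by ring
        _ = _ := by rw [h2]
    rw [Finset.sum_congr rfl (fun k _ => hper k)]
    have : ∀ k : Fin l, (p k - (q k : ℤ)) * ((b (bIdx l k) : ℤ) - (a (bIdx l k) : ℤ)) =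
        (p k - (q k : ℤ)) * (b (bIdx l k) : ℤ) - (p k - (q k : ℤ)) * (a (bIdx l k) : ℤ) :=
      fun k => by ring
    rw [Finset.sum_congr rfl (fun k _ => this k), Finset.sum_sub_distrib]
    have hb' : (∑ k, (p k - (q k : ℤ)) * (b (bIdx l k) : ℤ)) = eg p q b := rfl
    have ha' : (∑ k, (p k - (q k : ℤ)) * (a (bIdx l k) : ℤ)) = eg p q a := rfl
    rw [hb', ha', he, sub_self]
  have hfac : (monX a - monX b : MvPolynomial (Fin (2 * l)) K) =
      monX w * (monX ν - monX (revVec ν)) := by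
    rw [mul_sub, ← monX_add, ← monX_add, ← haw, ← hbw]
  rw [hfac]
  exact Ideal.mul_mem_left _ _ (Ideal.subset_span ⟨ν, hz, rfl⟩)

lemma monomial_eq_C_mul_monX {R : Type*} [CommSemiring R] {n : ℕ} (d : Fin n →₀ ℕ) (κ : R) :
    (monomial d κ : MvPolynomial (Fin n) R) = C κ * monX ⇑d := by
  rw [monX_eq_monomial, Finsupp.equivFunOnFinite_symm_coe, C_mul_monomial, mul_one]

lemma eg_revVec (p : Fin l → ℤ) (q : Fin l → ℕ) (v : Fin (2 * l) → ℕ) :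
    eg p q (revVec v) = ∑ k, (p k - (q k : ℤ)) * v (aIdx l k) := by
  rw [eg]
  refine Finset.sum_congr rfl fun k _ => ?_
  rw [show revVec v (bIdx l k) = v ((bIdx l k).rev) from rfl, rev_bIdx]

lemma sE_revVec (v : Fin (2 * l) → ℕ) (k : Fin l) : sE (revVec v) k = sE v k := by
  show v ((aIdx l k).rev) + v ((bIdx l k).rev) = _
  rw [rev_aIdx, rev_bIdx, add_comm]
  rfl

lemma zdot_eq (p : Fin l → ℤ) (q : Fin l → ℕ) (v : Fin (2 * l) → ℕ) :
    zdot (zeta p q) v = (∑ k, (p k - (q k : ℤ)) * v (aIdx l k)) - eg p q v := by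
  rw [zdot, sum_split]
  have h1 : ∀ k : Fin l, zeta p q (aIdx l k) * (v (aIdx l k) : ℤ) =
      (p k - (q k : ℤ)) * v (aIdx l k) := fun k => by rw [zeta_aIdx]
  have h2 : ∀ k : Fin l, zeta p q (bIdx l k) * (v (bIdx l k) : ℤ) =
      -((p k - (q k : ℤ)) * v (bIdx l k)) := fun k => by rw [zeta_bIdx]; ring
  rw [Finset.sum_congr rfl (fun k _ => h1 k), Finset.sum_congr rfl (fun k _ => h2 k),
    Finset.sum_neg_distrib, ← sub_eq_add_neg]
  rfl

lemma psi0_C (p : Fin l → ℤ) (q : Fin l → ℕ) (κ : K) :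
    psi0 (K := K) p q (C κ) = algebraMap K _ κ := by
  rw [← MvPolynomial.algebraMap_eq]
  exact (psi0 p q).commutes κ

lemma img_C (κ : K) :
    algebraMap (MvPolynomial (Fin (l + 1)) K) (FractionRing (MvPolynomial (Fin (l + 1)) K))
      (C κ) = algebraMap K _ κ := by
  rw [← MvPolynomial.algebraMap_eq, ← IsScalarTower.algebraMap_apply]

/-- The shifted exponent vector of a monomial. -/
def Dv (p : Fin l → ℤ) (q : Fin l → ℕ) (c : ℕ) (d : Fin (2 * l) →₀ ℕ) : Fin (l + 1) → ℕ :=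
  Fin.cons ((eg p q ⇑d + c).toNat) (sE ⇑d)

set_option maxHeartbeats 2000000 in
lemma img_monX_Dv (p : Fin l → ℤ) (q : Fin l → ℕ) (c : ℕ) (d : Fin (2 * l) →₀ ℕ)
    (hc : 0 ≤ eg p q ⇑d + c) :
    algebraMap (MvPolynomial (Fin (l + 1)) K) (FractionRing (MvPolynomial (Fin (l + 1)) K))
      (monX (Dv p q c d)) =
    Gm K l ^ (c : ℤ) * (Gm K l ^ eg p q ⇑d * ∏ k, Tm K k ^ sE ⇑d k) := by
  rw [Dv, ← key_mono, ← zpow_natCast (Gm K l), Int.toNat_of_nonneg hc,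
    zpow_add₀ Gm_ne_zero, mul_assoc, mul_comm (Gm K l ^ (c : ℤ)), ← mul_assoc, ← mul_assoc]
  ring

end Aux

set_option maxHeartbeats 4000000 in
theorem stmt5 {K : Type*} [Field K] {l : ℕ} (hl : 0 < l) (p : Fin l → ℤ) (q : Fin l → ℕ)
    (hp : ∀ k, -1 ≤ p k) (hpq : ∀ k, 0 ≤ p k + (q k : ℤ))
    (hdist : Function.Injective fun k => (p k, q k)) :
    sibirsky K p q = RingHom.ker (psi0 (K := K) p q).toRingHom := by
  classical
  apply le_antisymm
  · rw [sibirsky, Ideal.span_le]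
    rintro f ⟨v, hv, rfl⟩
    simp only [SetLike.mem_coe, RingHom.mem_ker]
    show psi0 (K := K) p q (monX v - monX (revVec v)) = 0
    have heg : Aux.eg p q (revVec v) = Aux.eg p q v := by
      rw [Aux.eg_revVec]
      have h1 := Aux.zdot_eq p q v
      omega
    have hsE : ∀ k, Aux.sE (revVec v) k = Aux.sE v k := Aux.sE_revVec v
    have hprod : (∏ k, Aux.Tm K k ^ Aux.sE (revVec v) k) = ∏ k, Aux.Tm K k ^ Aux.sE v k :=
      Finset.prod_congr rfl fun k _ => by rw [hsE k]
    rw [map_sub, Aux.psi0_monX, Aux.psi0_monX, heg, hprod, sub_self]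
  · intro f hf
    rw [RingHom.mem_ker] at hf
    have hf0 : psi0 (K := K) p q f = 0 := hf
    set s := f.support with hs
    set c : ℕ := s.sup (fun d => (- Aux.eg p q ⇑d).toNat) with hc
    have hcge : ∀ d ∈ s, 0 ≤ Aux.eg p q ⇑d + c := by
      intro d hd
      have h1 : (- Aux.eg p q ⇑d).toNat ≤ c := Finset.le_sup (f := fun d' : Fin (2 * l) →₀ ℕ => (- Aux.eg p q ⇑d').toNat) hd
      have h2 := Int.self_le_toNat (- Aux.eg p q ⇑d)
      omega
    set P : MvPolynomial (Fin (l + 1)) K :=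
      ∑ d ∈ s, C (coeff d f) * monX (Aux.Dv p q c d) with hP
    have himg : algebraMap (MvPolynomial (Fin (l + 1)) K)
        (FractionRing (MvPolynomial (Fin (l + 1)) K)) P = 0 := by
      rw [hP, map_sum]
      have hterm : ∀ d ∈ s,
          algebraMap (MvPolynomial (Fin (l + 1)) K)
            (FractionRing (MvPolynomial (Fin (l + 1)) K)) (C (coeff d f) * monX (Aux.Dv p q c d))
          = Aux.Gm K l ^ (c : ℤ) * psi0 (K := K) p q (monomial d (coeff d f)) := by
        intro d hd
        rw [map_mul, Aux.img_C, Aux.img_monX_Dv p q c d (hcge d hd),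
          Aux.monomial_eq_C_mul_monX, map_mul, Aux.psi0_C, Aux.psi0_monX]
        ring
      rw [Finset.sum_congr rfl hterm, ← Finset.mul_sum]
      have hfs : ∑ d ∈ s, psi0 (K := K) p q (monomial d (coeff d f)) = psi0 (K := K) p q f := by
        conv_rhs => rw [f.as_sum]
        rw [map_sum]
      rw [hfs, hf0, mul_zero]
    have hP0 : P = 0 := by
      apply Aux.algebraMap_injective
      rw [himg, map_zero]
    have hcoeff : ∀ e : Fin (l + 1) → ℕ,
        ∑ d ∈ s.filter (fun d => Aux.Dv p q c d = e), coeff d f = 0 := by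
      intro e
      have h0 := congrArg (coeff (Finsupp.equivFunOnFinite.symm e)) hP0
      rw [hP, coeff_zero] at h0
      rw [MvPolynomial.coeff_sum] at h0
      have hterm : ∀ d ∈ s, coeff (Finsupp.equivFunOnFinite.symm e)
          (C (coeff d f) * monX (Aux.Dv p q c d)) =
          if Aux.Dv p q c d = e then coeff d f else 0 := by
        intro d hd
        rw [Aux.monX_eq_monomial, coeff_C_mul, coeff_monomial]
        by_cases h : Aux.Dv p q c d = e
        · rw [if_pos h, if_pos (by rw [h]), mul_one]
        · rw [if_neg h, if_neg (fun hh => h (Finsupp.equivFunOnFinite.symm.injective hh)), mul_zero]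
      rw [Finset.sum_congr rfl hterm, Finset.sum_ite, Finset.sum_const_zero, add_zero] at h0
      exact h0
    set ρ : (Fin (l + 1) → ℕ) → (Fin (2 * l) →₀ ℕ) := fun e =>
      if h : ∃ d ∈ s, Aux.Dv p q c d = e then h.choose else 0 with hρ
    have hρ1 : ∀ d ∈ s, ρ (Aux.Dv p q c d) ∈ s ∧
        Aux.Dv p q c (ρ (Aux.Dv p q c d)) = Aux.Dv p q c d := by
      intro d hd
      have hex : ∃ d' ∈ s, Aux.Dv p q c d' = Aux.Dv p q c d := ⟨d, hd, rfl⟩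
      rw [hρ]
      simp only [dif_pos hex]
      exact ⟨hex.choose_spec.1, hex.choose_spec.2⟩
    have hsum0 : ∑ d ∈ s, C (coeff d f) * (monX (K := K) ⇑(ρ (Aux.Dv p q c d))) = 0 := by
      rw [← Finset.sum_fiberwise_of_maps_to (t := s.image (fun d => Aux.Dv p q c d))
        (fun d hd => Finset.mem_image_of_mem _ hd)]
      refine Finset.sum_eq_zero fun e he => ?_
      have hcg : ∀ d ∈ s.filter (fun d => Aux.Dv p q c d = e),
          C (coeff d f) * monX (K := K) ⇑(ρ (Aux.Dv p q c d)) =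
          C (coeff d f) * monX ⇑(ρ e) := by
        intro d hd
        rw [(Finset.mem_filter.mp hd).2]
      rw [Finset.sum_congr rfl hcg, ← Finset.sum_mul, ← map_sum, hcoeff e, map_zero, zero_mul]
    have hdecomp : f = ∑ d ∈ s, C (coeff d f) * (monX ⇑d - monX ⇑(ρ (Aux.Dv p q c d))) := by
      have h1 : f = ∑ d ∈ s, C (coeff d f) * monX ⇑d := by
        conv_lhs => rw [f.as_sum]
        exact Finset.sum_congr rfl fun d _ => Aux.monomial_eq_C_mul_monX d (coeff d f)
      rw [Finset.sum_congr rfl (fun d _ => mul_sub (C (coeff d f)) _ _),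
        Finset.sum_sub_distrib, hsum0, sub_zero, ← h1]
    rw [hdecomp]
    refine Ideal.sum_mem _ fun d hd => Ideal.mul_mem_left _ _ ?_
    have hDd := (hρ1 d hd).2
    have hA : ((Aux.eg p q ⇑(ρ (Aux.Dv p q c d)) + c).toNat) =
        ((Aux.eg p q ⇑d + c).toNat) := by
      have := congrFun hDd 0
      simpa [Aux.Dv, Fin.cons_zero] using this
    have hsE : ∀ k, Aux.sE ⇑(ρ (Aux.Dv p q c d)) k = Aux.sE ⇑d k := by
      intro k
      have := congrFun hDd k.succ
      simpa [Aux.Dv, Fin.cons_succ] using this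
    have hge1 := hcge d hd
    have hge2 := hcge _ (hρ1 d hd).1
    have heg : Aux.eg p q ⇑d = Aux.eg p q ⇑(ρ (Aux.Dv p q c d)) := by omega
    exact Aux.binomial_mem p q ⇑d ⇑(ρ (Aux.Dv p q c d)) (fun k => (hsE k).symm) heg
end
end

section
/- Let K be a field and let α, β ∈ ℕ^{2ℓ} have disjoint supports (for every index i, α_i = 0 or β_i = 0). If ψ₀([α] − [β]) = 0, then β = α̂ (i.e., β_i = α_{2ℓ+1−i} for all i) and α ∈ M (i.e., ζ·α = 0). -/
open MvPolynomial

noncomputable section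

section Aux

/-- Split a product over `Fin (2*l)` into the `a`-part and the `b`-part. -/
lemma prod_split {M : Type*} [CommMonoid M] (l : ℕ) (g : Fin (2 * l) → M) :
    ∏ i, g i = (∏ k : Fin l, g (aIdx l k)) * ∏ k : Fin l, g (bIdx l k) := by
  rw [← Equiv.prod_comp (finCongr (two_mul l).symm) g, Fin.prod_univ_add]
  have h1 : ∀ k : Fin l, g ((finCongr (two_mul l).symm) (Fin.castAdd l k)) = g (aIdx l k) :=
    fun k => rfl
  have h2 : (∏ i : Fin l, g ((finCongr (two_mul l).symm) (Fin.natAdd l i))) =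
      ∏ k : Fin l, g (bIdx l k) := by
    rw [← Equiv.prod_comp (Fin.revPerm) (fun k : Fin l =>
      g (finCongr (two_mul l).symm (Fin.natAdd l k)))]
    exact Finset.prod_congr rfl fun k _ => by
      congr 1
      exact Fin.ext (by
        simp only [finCongr_apply, Fin.coe_cast, Fin.coe_natAdd, Fin.revPerm_apply,
          Fin.val_rev, bIdx]
        omega)
  rw [Finset.prod_congr rfl (fun k _ => h1 k), h2]

lemma sum_split {M : Type*} [AddCommMonoid M] (l : ℕ) (g : Fin (2 * l) → M) :
    ∑ i, g i = (∑ k : Fin l, g (aIdx l k)) + ∑ k : Fin l, g (bIdx l k) := by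
  rw [← Equiv.sum_comp (finCongr (two_mul l).symm) g, Fin.sum_univ_add]
  have h1 : ∀ k : Fin l, g ((finCongr (two_mul l).symm) (Fin.castAdd l k)) = g (aIdx l k) :=
    fun k => rfl
  have h2 : (∑ i : Fin l, g ((finCongr (two_mul l).symm) (Fin.natAdd l i))) =
      ∑ k : Fin l, g (bIdx l k) := by
    rw [← Equiv.sum_comp (Fin.revPerm) (fun k : Fin l =>
      g (finCongr (two_mul l).symm (Fin.natAdd l k)))]
    exact Finset.sum_congr rfl fun k _ => by
      congr 1
      exact Fin.ext (by
        simp only [finCongr_apply, Fin.coe_cast, Fin.coe_natAdd, Fin.revPerm_apply,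
          Fin.val_rev, bIdx]
        omega)
  rw [Finset.sum_congr rfl (fun k _ => h1 k), h2]

lemma prod_zpow₀ {F : Type*} [Field F] {γ : F} (hγ : γ ≠ 0) {ι : Type*} (s : Finset ι)
    (z : ι → ℤ) : ∏ i ∈ s, γ ^ z i = γ ^ (∑ i ∈ s, z i) := by
  classical
  induction s using Finset.induction_on with
  | empty => simp
  | insert _ _ hns ih => simp [Finset.prod_insert hns, Finset.sum_insert hns, ih, zpow_add₀ hγ]

lemma X_pow_mul_prod {K : Type*} [Field K] {l : ℕ} (a : ℕ) (d : Fin l → ℕ) :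
    (X 0 ^ a * ∏ k, X (Fin.succ k) ^ d k : MvPolynomial (Fin (l + 1)) K) =
      monomial (Finsupp.single 0 a + ∑ k, Finsupp.single (Fin.succ k) (d k)) 1 := by
  classical
  have h1 : ∀ s : Finset (Fin l),
      (∏ k ∈ s, (X (Fin.succ k) : MvPolynomial (Fin (l + 1)) K) ^ d k) =
        monomial (∑ k ∈ s, Finsupp.single (Fin.succ k) (d k)) 1 := by
    intro s
    induction s using Finset.induction_on with
    | empty => simp
    | insert _ _ hns ih =>
        rw [Finset.prod_insert hns, ih, Finset.sum_insert hns, X_pow_eq_monomial,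
          monomial_mul, one_mul]
  rw [h1, X_pow_eq_monomial, monomial_mul, one_mul]

/-- `ψ₀` on a monomial `[v]`. -/
lemma psi0_monX {K : Type*} [Field K] {l : ℕ} (p : Fin l → ℤ) (q : Fin l → ℕ)
    (v : Fin (2 * l) → ℕ) :
    psi0 (K := K) p q (monX v) =
      (algebraMap (MvPolynomial (Fin (l + 1)) K)
          (FractionRing (MvPolynomial (Fin (l + 1)) K)) (X 0)) ^
        (∑ k : Fin l, (p k - (q k : ℤ)) * (v (bIdx l k) : ℤ)) *
      algebraMap (MvPolynomial (Fin (l + 1)) K)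
        (FractionRing (MvPolynomial (Fin (l + 1)) K))
        (∏ k : Fin l, X (Fin.succ k) ^ (v (aIdx l k) + v (bIdx l k))) := by
  classical
  set R := MvPolynomial (Fin (l + 1)) K
  set F := FractionRing R
  set am := algebraMap R F with ham
  have hγ : am (X 0) ≠ 0 := by
    intro h0
    exact MvPolynomial.X_ne_zero 0 (IsFractionRing.injective R F (by rw [map_zero]; exact h0))
  rw [monX, psi0, map_prod]
  simp only [map_pow, aeval_X]
  rw [prod_split]
  have ha : ∀ k : Fin l,
      (if h : ((aIdx l k : Fin (2 * l)) : ℕ) < l then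
          am (X (Fin.succ ⟨((aIdx l k : Fin (2 * l)) : ℕ), h⟩))
        else
          am (X 0) ^ (p ⟨2 * l - 1 - ((aIdx l k : Fin (2 * l)) : ℕ), by
              have := (aIdx l k).isLt; omega⟩ -
            (q ⟨2 * l - 1 - ((aIdx l k : Fin (2 * l)) : ℕ), by
              have := (aIdx l k).isLt; omega⟩ : ℤ)) *
          am (X (Fin.succ ⟨2 * l - 1 - ((aIdx l k : Fin (2 * l)) : ℕ), by
            have := (aIdx l k).isLt; omega⟩))) = am (X (Fin.succ k)) := by
    intro k
    have hk : ((aIdx l k : Fin (2 * l)) : ℕ) < l := by simpa [aIdx] using k.isLt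
    rw [dif_pos hk]
    simp [aIdx]
  have hb : ∀ k : Fin l,
      (if h : ((bIdx l k : Fin (2 * l)) : ℕ) < l then
          am (X (Fin.succ ⟨((bIdx l k : Fin (2 * l)) : ℕ), h⟩))
        else
          am (X 0) ^ (p ⟨2 * l - 1 - ((bIdx l k : Fin (2 * l)) : ℕ), by
              have := (bIdx l k).isLt; omega⟩ -
            (q ⟨2 * l - 1 - ((bIdx l k : Fin (2 * l)) : ℕ), by
              have := (bIdx l k).isLt; omega⟩ : ℤ)) *
          am (X (Fin.succ ⟨2 * l - 1 - ((bIdx l k : Fin (2 * l)) : ℕ), by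
            have := (bIdx l k).isLt; omega⟩))) =
        am (X 0) ^ (p k - (q k : ℤ)) * am (X (Fin.succ k)) := by
    intro k
    have hk := k.isLt
    have h1 : ¬ ((bIdx l k : Fin (2 * l)) : ℕ) < l := by simp [bIdx]; omega
    rw [dif_neg h1]
    have h2 : 2 * l - 1 - ((bIdx l k : Fin (2 * l)) : ℕ) = (k : ℕ) := by
      simp [bIdx]; omega
    simp [h2]
  calc (∏ k : Fin l, _ ^ v (aIdx l k)) * (∏ k : Fin l, _ ^ v (bIdx l k))
      = (∏ k : Fin l, am (X (Fin.succ k)) ^ v (aIdx l k)) *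
        ∏ k : Fin l, (am (X 0) ^ (p k - (q k : ℤ)) * am (X (Fin.succ k))) ^ v (bIdx l k) := by
        congr 1
        · exact Finset.prod_congr rfl fun k _ => by rw [ha k]
        · exact Finset.prod_congr rfl fun k _ => by rw [hb k]
    _ = _ := by
        simp only [mul_pow]
        rw [Finset.prod_mul_distrib]
        have hz : ∀ k : Fin l, (am (X 0) ^ (p k - (q k : ℤ))) ^ v (bIdx l k) =
            am (X 0) ^ ((p k - (q k : ℤ)) * (v (bIdx l k) : ℤ)) := fun k => by
          rw [← zpow_natCast (am (X 0) ^ (p k - (q k : ℤ))), ← zpow_mul]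
        rw [Finset.prod_congr rfl fun k _ => hz k, prod_zpow₀ hγ]
        simp only [map_prod, pow_add, map_mul, map_pow, Finset.prod_mul_distrib]
        ring

end Aux

theorem stmt9 {K : Type*} [Field K] {l : ℕ} (hl : 0 < l) (p : Fin l → ℤ) (q : Fin l → ℕ)
    (hp : ∀ k, -1 ≤ p k) (hpq : ∀ k, 0 ≤ p k + (q k : ℤ))
    (hdist : Function.Injective fun k => (p k, q k))
    (α β : Fin (2 * l) → ℕ) (hsupp : ∀ i, α i = 0 ∨ β i = 0)
    (h : psi0 (K := K) p q (monX α - monX β) = 0) :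
    β = revVec α ∧ zdot (zeta p q) α = 0 := by
  classical
  set R := MvPolynomial (Fin (l + 1)) K with hR
  set F := FractionRing R with hF
  set am := algebraMap R F with ham
  have hγ : am (X 0) ≠ 0 := by
    intro h0
    exact MvPolynomial.X_ne_zero 0 (IsFractionRing.injective R F (by rw [map_zero]; exact h0))
  set Ea := ∑ k : Fin l, (p k - (q k : ℤ)) * (α (bIdx l k) : ℤ) with hEa
  set Eb := ∑ k : Fin l, (p k - (q k : ℤ)) * (β (bIdx l k) : ℤ) with hEb
  have h' : psi0 (K := K) p q (monX α) = psi0 (K := K) p q (monX β) := by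
    rwa [map_sub, sub_eq_zero] at h
  rw [psi0_monX p q α, psi0_monX p q β] at h'
  have key : am (X 0) ^ Ea *
      am (∏ k : Fin l, X (Fin.succ k) ^ (α (aIdx l k) + α (bIdx l k))) =
      am (X 0) ^ Eb *
      am (∏ k : Fin l, X (Fin.succ k) ^ (β (aIdx l k) + β (bIdx l k))) := h'
  set N := max (-Ea) (-Eb) with hN
  have hNa : 0 ≤ Ea + N := by have := le_max_left (-Ea) (-Eb); omega
  have hNb : 0 ≤ Eb + N := by have := le_max_right (-Ea) (-Eb); omega
  set a := (Ea + N).toNat with haDef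
  set b := (Eb + N).toNat with hbDef
  have haN : (a : ℤ) = Ea + N := Int.toNat_of_nonneg hNa
  have hbN : (b : ℤ) = Eb + N := Int.toNat_of_nonneg hNb
  have hpoly : (X 0 ^ a * ∏ k : Fin l, X (Fin.succ k) ^ (α (aIdx l k) + α (bIdx l k)) : R) =
      X 0 ^ b * ∏ k : Fin l, X (Fin.succ k) ^ (β (aIdx l k) + β (bIdx l k)) := by
    apply IsFractionRing.injective R F
    rw [map_mul, map_mul, map_pow, map_pow]
    have e1 : am (X 0) ^ (a : ℕ) = am (X 0) ^ Ea * am (X 0) ^ N := by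
      rw [← zpow_natCast (am (X 0)) a, haN, zpow_add₀ hγ]
    have e2 : am (X 0) ^ (b : ℕ) = am (X 0) ^ Eb * am (X 0) ^ N := by
      rw [← zpow_natCast (am (X 0)) b, hbN, zpow_add₀ hγ]
    rw [e1, e2]
    calc am (X 0) ^ Ea * am (X 0) ^ N *
          am (∏ k : Fin l, X (Fin.succ k) ^ (α (aIdx l k) + α (bIdx l k)))
        = am (X 0) ^ Ea *
            am (∏ k : Fin l, X (Fin.succ k) ^ (α (aIdx l k) + α (bIdx l k))) *
            am (X 0) ^ N := by ring
      _ = am (X 0) ^ Eb *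
            am (∏ k : Fin l, X (Fin.succ k) ^ (β (aIdx l k) + β (bIdx l k))) *
            am (X 0) ^ N := by rw [key]
      _ = _ := by ring
  have hexp : (Finsupp.single (0 : Fin (l + 1)) a +
        ∑ k : Fin l, Finsupp.single (Fin.succ k) (α (aIdx l k) + α (bIdx l k))) =
      (Finsupp.single (0 : Fin (l + 1)) b +
        ∑ k : Fin l, Finsupp.single (Fin.succ k) (β (aIdx l k) + β (bIdx l k))) := by
    apply monomial_left_injective (one_ne_zero (α := K))
    beta_reduce
    rw [← X_pow_mul_prod, ← X_pow_mul_prod]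
    exact hpoly
  have hab : a = b := by
    have h0 := congrArg (fun f => f 0) hexp
    simpa [Finsupp.finset_sum_apply, Finsupp.single_apply, Fin.succ_ne_zero] using h0
  have hd : ∀ j : Fin l,
      α (aIdx l j) + α (bIdx l j) = β (aIdx l j) + β (bIdx l j) := by
    intro j
    have h0 := congrArg (fun f => f (Fin.succ j)) hexp
    simpa [Finsupp.finset_sum_apply, Finsupp.single_apply, Fin.succ_inj,
      (Fin.succ_ne_zero j).symm, Finset.sum_add_distrib, Finset.sum_ite_eq'] using h0
  have hE : Ea = Eb := by
    have h1 : (a : ℤ) = (b : ℤ) := by exact_mod_cast hab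
    linarith [haN, hbN]
  have hk : ∀ k : Fin l, β (aIdx l k) = α (bIdx l k) ∧ β (bIdx l k) = α (aIdx l k) := by
    intro k
    have h1 := hsupp (aIdx l k)
    have h2 := hsupp (bIdx l k)
    have h3 := hd k
    omega
  constructor
  · funext i
    by_cases hi : (i : ℕ) < l
    · have e1 : i = aIdx l ⟨(i : ℕ), hi⟩ := Fin.ext rfl
      have e2 : Fin.rev i = bIdx l ⟨(i : ℕ), hi⟩ := Fin.ext (by simp [bIdx, Fin.val_rev]; omega)
      rw [revVec, e2]
      conv_lhs => rw [e1]
      exact (hk ⟨(i : ℕ), hi⟩).1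
    · have hil := i.isLt
      have hkl : 2 * l - 1 - (i : ℕ) < l := by omega
      have e1 : i = bIdx l ⟨2 * l - 1 - (i : ℕ), hkl⟩ := Fin.ext (by simp [bIdx]; omega)
      have e2 : Fin.rev i = aIdx l ⟨2 * l - 1 - (i : ℕ), hkl⟩ :=
        Fin.ext (by simp [aIdx, Fin.val_rev]; omega)
      rw [revVec, e2]
      conv_lhs => rw [e1]
      exact (hk ⟨2 * l - 1 - (i : ℕ), hkl⟩).2
  · have hEb' : Eb = ∑ k : Fin l, (p k - (q k : ℤ)) * (α (aIdx l k) : ℤ) := by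
      rw [hEb]
      exact Finset.sum_congr rfl fun k _ => by rw [(hk k).2]
    have hsplit : zdot (zeta p q) α =
        (∑ k : Fin l, (p k - (q k : ℤ)) * (α (aIdx l k) : ℤ)) +
        ∑ k : Fin l, ((q k : ℤ) - p k) * (α (bIdx l k) : ℤ) := by
      rw [zdot, sum_split l (fun i => zeta p q i * (α i : ℤ))]
      congr 1
      · exact Finset.sum_congr rfl fun k _ => by rw [zeta_aIdx]
      · exact Finset.sum_congr rfl fun k _ => by rw [zeta_bIdx]
    have hneg : ∑ k : Fin l, ((q k : ℤ) - p k) * (α (bIdx l k) : ℤ) = -Ea := by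
      rw [hEa, ← Finset.sum_neg_distrib]
      exact Finset.sum_congr rfl fun k _ => by ring
    rw [hsplit, hneg, ← hEb', ← hE]
    ring
end
end

section
/- Let R ⊆ ℂ^{2ℓ} be the set of all time-reversible systems of the family. Then the Zariski closure of R (the closure of R in the Zariski topology of ℂ^{2ℓ}, equivalently the smallest affine variety containing R) equals V(I_S), the variety of the Sibirsky ideal. -/
open MvPolynomial

noncomputable section

namespace Stmt11Aux

variable {l : ℕ} {α : Type*}

/-- zk k = p_k - q_k -/
def zk (p : Fin l → ℤ) (q : Fin l → ℕ) (k : Fin l) : ℤ := p k - (q k : ℤ)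

def Lfun (p : Fin l → ℤ) (q : Fin l → ℕ) (v : Fin (2 * l) → ℕ) : ℤ :=
  ∑ k : Fin l, zk p q k * (v (bIdx l k) : ℤ)

def Afun (p : Fin l → ℤ) (q : Fin l → ℕ) (v : Fin (2 * l) → ℕ) : ℤ :=
  ∑ k : Fin l, zk p q k * (v (aIdx l k) : ℤ)

def sfun (v : Fin (2 * l) → ℕ) (k : Fin l) : ℕ := v (aIdx l k) + v (bIdx l k)

def glue (A B : Fin l → α) : Fin (2 * l) → α := fun i =>
  if h : (i : ℕ) < l then A ⟨(i : ℕ), h⟩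
  else B ⟨2 * l - 1 - (i : ℕ), by have := i.isLt; omega⟩

@[simp] lemma glue_aIdx (A B : Fin l → α) (k : Fin l) : glue A B (aIdx l k) = A k := by
  have hk := k.isLt
  simp only [glue, aIdx, hk, dif_pos]
  exact dif_pos hk

@[simp] lemma glue_bIdx (A B : Fin l → α) (k : Fin l) : glue A B (bIdx l k) = B k := by
  have hk := k.isLt
  have h1 : ¬ ((bIdx l k : ℕ) < l) := by simp only [bIdx]; omega
  simp only [glue, h1, dif_neg, not_false_iff]
  congr 1
  ext
  simp only [bIdx]
  omega

lemma rev_aIdx (k : Fin l) : Fin.rev (aIdx l k) = bIdx l k := by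
  have hk := k.isLt
  ext
  rw [Fin.val_rev]
  simp only [aIdx, bIdx]
  omega

lemma rev_bIdx (k : Fin l) : Fin.rev (bIdx l k) = aIdx l k := by
  have hk := k.isLt
  ext
  rw [Fin.val_rev]
  simp only [aIdx, bIdx]
  omega

@[simp] lemma revVec_aIdx (v : Fin (2 * l) → α) (k : Fin l) :
    revVec v (aIdx l k) = v (bIdx l k) := by rw [revVec, rev_aIdx]

@[simp] lemma revVec_bIdx (v : Fin (2 * l) → α) (k : Fin l) :
    revVec v (bIdx l k) = v (aIdx l k) := by rw [revVec, rev_bIdx]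

def splitEquiv (l : ℕ) : Fin l ⊕ Fin l ≃ Fin (2 * l) where
  toFun := Sum.elim (aIdx l) (bIdx l)
  invFun i := if h : (i : ℕ) < l then .inl ⟨(i : ℕ), h⟩
    else .inr ⟨2 * l - 1 - (i : ℕ), by have := i.isLt; omega⟩
  left_inv := by
    rintro (k | k) <;> have hk := k.isLt
    · simp only [Sum.elim_inl, aIdx, hk, dif_pos]
      exact dif_pos hk
    · have h1 : ¬ ((bIdx l k : ℕ) < l) := by simp only [bIdx]; omega
      simp only [Sum.elim_inr, h1, dif_neg, not_false_iff]
      refine (dif_neg h1).trans ?_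
      congr 1
      ext
      simp only [bIdx]
      omega
  right_inv := by
    intro i
    have hi := i.isLt
    by_cases h : (i : ℕ) < l
    · simp only [h, dif_pos, Sum.elim_inl]
      ext; rfl
    · simp only [h, dif_neg, not_false_iff, Sum.elim_inr]
      ext
      simp only [bIdx]
      omega

lemma prod_split {M : Type*} [CommMonoid M] (F : Fin (2 * l) → M) :
    ∏ i, F i = (∏ k, F (aIdx l k)) * ∏ k, F (bIdx l k) := by
  rw [← (splitEquiv l).prod_comp F, Fintype.prod_sum_type]
  rfl

lemma sum_split {M : Type*} [AddCommMonoid M] (F : Fin (2 * l) → M) :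
    ∑ i, F i = (∑ k, F (aIdx l k)) + ∑ k, F (bIdx l k) := by
  rw [← (splitEquiv l).sum_comp F, Fintype.sum_sum_type]
  rfl

lemma zeta_aIdx (p : Fin l → ℤ) (q : Fin l → ℕ) (k : Fin l) :
    zeta p q (aIdx l k) = zk p q k := by
  have hk := k.isLt
  simp only [zeta, aIdx, hk, dif_pos, zk]
  exact dif_pos hk

lemma zeta_bIdx (p : Fin l → ℤ) (q : Fin l → ℕ) (k : Fin l) :
    zeta p q (bIdx l k) = - zk p q k := by
  have hk := k.isLt
  have h1 : ¬ ((bIdx l k : ℕ) < l) := by simp only [bIdx]; omega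
  simp only [zeta, h1, dif_neg, not_false_iff, zk]
  have h2 : 2 * l - 1 - (bIdx l k : ℕ) = (k : ℕ) := by simp only [bIdx]; omega
  simp only [h2, Fin.eta]
  ring

lemma zdot_zeta (p : Fin l → ℤ) (q : Fin l → ℕ) (v : Fin (2 * l) → ℕ) :
    zdot (zeta p q) v = Afun p q v - Lfun p q v := by
  rw [zdot, sum_split, Afun, Lfun, ← Finset.sum_sub_distrib]
  rw [← Finset.sum_add_distrib]
  refine Finset.sum_congr rfl fun k _ => ?_
  rw [zeta_aIdx, zeta_bIdx]
  ring

lemma monX_add {K : Type*} [CommSemiring K] {n : ℕ} (u w : Fin n → ℕ) :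
    (monX (fun i => u i + w i) : MvPolynomial (Fin n) K) = monX u * monX w := by
  simp [monX, pow_add, Finset.prod_mul_distrib]

lemma eval_monX {K : Type*} [CommSemiring K] {n : ℕ} (y : Fin n → K) (v : Fin n → ℕ) :
    eval y (monX v) = ∏ i, y i ^ v i := by
  simp [monX]

lemma zpow_sum₀ {G₀ : Type*} [Field G₀] {γ : G₀} (hγ : γ ≠ 0)
    {ι : Type*} (s : Finset ι) (F : ι → ℤ) :
    γ ^ (∑ k ∈ s, F k) = ∏ k ∈ s, γ ^ F k := by
  classical
  induction s using Finset.induction with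
  | empty => simp
  | insert _ _ h ih => rw [Finset.sum_insert h, Finset.prod_insert h, zpow_add₀ hγ, ih]


variable {K : Type*} [Field K]

lemma eval_monX_timeRev (p : Fin l → ℤ) (q : Fin l → ℕ) {γ : K} (hγ : γ ≠ 0)
    (t : Fin l → K) (v : Fin (2 * l) → ℕ) :
    eval (glue t fun k => γ ^ (zk p q k) * t k) (monX v)
      = γ ^ (Lfun p q v) * ∏ k, t k ^ (sfun v k) := by
  rw [eval_monX, prod_split]
  simp only [glue_aIdx, glue_bIdx, mul_pow]
  have h1 : ∀ k : Fin l, (γ ^ zk p q k) ^ (v (bIdx l k)) = γ ^ (zk p q k * (v (bIdx l k) : ℤ)) := by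
    intro k
    rw [zpow_mul, zpow_natCast]
  rw [Finset.prod_mul_distrib]
  rw [Finset.prod_congr rfl fun k _ => h1 k]
  rw [← zpow_sum₀ hγ, ← Lfun]
  have h2 : ∀ k : Fin l, t k ^ (sfun v k) = t k ^ (v (aIdx l k)) * t k ^ (v (bIdx l k)) := by
    intro k; rw [sfun, pow_add]
  rw [Finset.prod_congr rfl fun k _ => h2 k, Finset.prod_mul_distrib]
  ring

lemma timeRev_glue (p : Fin l → ℤ) (q : Fin l → ℕ) {γ : K} (hγ : γ ≠ 0) (t : Fin l → K) :
    TimeRev p q (glue t fun k => γ ^ (zk p q k) * t k) := by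
  exact ⟨γ, hγ, fun k => by simp [zk]⟩

lemma timeRev_form (p : Fin l → ℤ) (q : Fin l → ℕ) {y : Fin (2 * l) → K}
    (h : TimeRev p q y) :
    ∃ γ : K, ∃ t : Fin l → K, γ ≠ 0 ∧ y = glue t (fun k => γ ^ (zk p q k) * t k) := by
  obtain ⟨γ, hγ, hy⟩ := h
  refine ⟨γ, fun k => y (aIdx l k), hγ, funext fun i => ?_⟩
  have hi := i.isLt
  by_cases h : (i : ℕ) < l
  · have : aIdx l ⟨(i : ℕ), h⟩ = i := by ext; rfl
    simp only [glue, h, dif_pos]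
    rw [this]
  · have hb : bIdx l ⟨2 * l - 1 - (i : ℕ), by omega⟩ = i := by
      ext; simp only [bIdx]; omega
    simp only [glue, h, dif_neg, not_false_iff]
    conv_lhs => rw [← hb]
    rw [hy]
    rfl

lemma sfun_revVec (v : Fin (2 * l) → ℕ) : sfun (revVec v) = sfun v := by
  funext k
  simp [sfun, Nat.add_comm]

lemma Lfun_revVec (p : Fin l → ℤ) (q : Fin l → ℕ) (v : Fin (2 * l) → ℕ) :
    Lfun p q (revVec v) = Afun p q v := by
  simp [Lfun, Afun]

lemma gen_vanish (p : Fin l → ℤ) (q : Fin l → ℕ) {v : Fin (2 * l) → ℕ}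
    (hv : zdot (zeta p q) v = 0) {y : Fin (2 * l) → K} (hy : TimeRev p q y) :
    eval y (monX v - monX (revVec v)) = 0 := by
  obtain ⟨γ, t, hγ, rfl⟩ := timeRev_form p q hy
  rw [map_sub, eval_monX_timeRev p q hγ, eval_monX_timeRev p q hγ,
    sfun_revVec, Lfun_revVec]
  have : Afun p q v = Lfun p q v := by
    have := zdot_zeta p q v
    omega
  rw [this, sub_self]


lemma cases_idx (i : Fin (2 * l)) : (∃ k, i = aIdx l k) ∨ (∃ k, i = bIdx l k) := by
  have hi := i.isLt
  by_cases h : (i : ℕ) < l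
  · exact Or.inl ⟨⟨(i : ℕ), h⟩, by ext; rfl⟩
  · exact Or.inr ⟨⟨2 * l - 1 - (i : ℕ), by omega⟩, by ext; simp only [bIdx]; omega⟩

lemma binom_mem {K : Type*} [Field K] (p : Fin l → ℤ) (q : Fin l → ℕ)
    {ν μ : Fin (2 * l) → ℕ} (hs : ∀ k, sfun ν k = sfun μ k)
    (hL : Lfun p q ν = Lfun p q μ) :
    (monX ν - monX μ : MvPolynomial (Fin (2 * l)) K) ∈ sibirsky K p q := by
  set c : Fin l → ℤ := fun k => (ν (bIdx l k) : ℤ) - (μ (bIdx l k) : ℤ) with hc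
  set τ : Fin (2 * l) → ℕ := glue (fun k => (-(c k)).toNat) (fun k => (c k).toNat) with hτ
  set ρ : Fin (2 * l) → ℕ := fun i => μ i - revVec τ i with hρ
  have hτa : ∀ k, τ (aIdx l k) = (-(c k)).toNat := fun k => glue_aIdx _ _ k
  have hτb : ∀ k, τ (bIdx l k) = (c k).toNat := fun k => glue_bIdx _ _ k
  have hrτa : ∀ k, revVec τ (aIdx l k) = (c k).toNat := fun k => by
    rw [revVec_aIdx, hτb]
  have hrτb : ∀ k, revVec τ (bIdx l k) = (-(c k)).toNat := fun k => by
    rw [revVec_bIdx, hτa]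
  have hν : ν = fun i => τ i + ρ i := by
    funext i
    rcases cases_idx i with ⟨k, rfl⟩ | ⟨k, rfl⟩
    · have h1 := hs k
      simp only [sfun] at h1
      have hck : c k = (ν (bIdx l k) : ℤ) - (μ (bIdx l k) : ℤ) := rfl
      simp only [hρ, hτa, hrτa]
      omega
    · have h1 := hs k
      simp only [sfun] at h1
      have hck : c k = (ν (bIdx l k) : ℤ) - (μ (bIdx l k) : ℤ) := rfl
      simp only [hρ, hτb, hrτb]
      omega
  have hμ : μ = fun i => revVec τ i + ρ i := by
    funext i
    rcases cases_idx i with ⟨k, rfl⟩ | ⟨k, rfl⟩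
    · have h1 := hs k
      simp only [sfun] at h1
      have hck : c k = (ν (bIdx l k) : ℤ) - (μ (bIdx l k) : ℤ) := rfl
      simp only [hρ, hrτa]
      omega
    · have h1 := hs k
      simp only [sfun] at h1
      have hck : c k = (ν (bIdx l k) : ℤ) - (μ (bIdx l k) : ℤ) := rfl
      simp only [hρ, hrτb]
      omega
  have hzd : zdot (zeta p q) τ = 0 := by
    rw [zdot_zeta]
    have hA : Afun p q τ - Lfun p q τ = -(Lfun p q ν - Lfun p q μ) := by
      rw [Afun, Lfun, Lfun, Lfun, ← Finset.sum_sub_distrib, ← Finset.sum_sub_distrib,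
        ← Finset.sum_neg_distrib]
      refine Finset.sum_congr rfl fun k _ => ?_
      rw [hτa, hτb]
      have : ((-(c k)).toNat : ℤ) - ((c k).toNat : ℤ) = -(c k) := by omega
      have hck : ((ν (bIdx l k) : ℤ)) - (μ (bIdx l k) : ℤ) = c k := rfl
      rw [← mul_sub, this, ← mul_sub, hck]
      ring
    rw [hA, hL]
    ring
  have e1 : (monX ν : MvPolynomial (Fin (2 * l)) K) = monX τ * monX ρ := by
    rw [hν, monX_add]
  have e2 : (monX μ : MvPolynomial (Fin (2 * l)) K) = monX (revVec τ) * monX ρ := by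
    rw [hμ, monX_add]
  have : (monX ν - monX μ : MvPolynomial (Fin (2 * l)) K)
      = monX ρ * (monX τ - monX (revVec τ)) := by
    rw [e1, e2]; ring
  rw [this]
  exact Ideal.mul_mem_left _ _ (Ideal.subset_span ⟨τ, hzd, rfl⟩)


lemma monomial_eq_C_mul_monX {K : Type*} [CommSemiring K] {n : ℕ}
    (d : Fin n →₀ ℕ) (c : K) : monomial d c = C c * monX ⇑d := by
  rw [monomial_eq]
  congr 1
  rw [Finsupp.prod_fintype _ _ (fun i => pow_zero _)]
  rfl

lemma mem_of_vanish (p : Fin l → ℤ) (q : Fin l → ℕ)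
    (f : MvPolynomial (Fin (2 * l)) ℂ)
    (hf : ∀ y : Fin (2 * l) → ℂ, TimeRev p q y → eval y f = 0) :
    f ∈ sibirsky ℂ p q := by
  classical
  set N : ℕ := f.support.sup (fun d => (-(Lfun p q ⇑d)).toNat) with hN
  have hLN : ∀ d ∈ f.support, 0 ≤ Lfun p q ⇑d + (N : ℤ) := by
    intro d hd
    have h2 : (-(Lfun p q ⇑d)).toNat ≤ N :=
      Finset.le_sup (f := fun d : Fin (2 * l) →₀ ℕ => (-(Lfun p q ⇑d)).toNat) hd
    omega
  set E : (Fin (2 * l) →₀ ℕ) → (Fin (l + 1) → ℕ) :=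
    fun d => Fin.cons ((Lfun p q ⇑d + N).toNat) (sfun ⇑d) with hE
  set G : MvPolynomial (Fin (l + 1)) ℂ :=
    ∑ d ∈ f.support, monomial (Finsupp.equivFunOnFinite.symm (E d)) (coeff d f) with hG
  have hyf : ∀ (γ : ℂ), γ ≠ 0 → ∀ t : Fin l → ℂ,
      eval (glue t fun k => γ ^ zk p q k * t k) f
        = ∑ d ∈ f.support, coeff d f * (γ ^ (Lfun p q ⇑d) * ∏ k, t k ^ sfun ⇑d k) := by
    intro γ hγ t
    conv_lhs => rw [f.as_sum]
    rw [map_sum]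
    refine Finset.sum_congr rfl fun d hd => ?_
    rw [eval_monomial, Finsupp.prod_fintype _ _ (fun i => pow_zero _)]
    rw [← eval_monX (glue t fun k => γ ^ zk p q k * t k) ⇑d, eval_monX_timeRev p q hγ]
  have hGx : ∀ (γ : ℂ) (t : Fin l → ℂ),
      eval (Fin.cons γ t) G
        = ∑ d ∈ f.support, coeff d f * (γ ^ ((Lfun p q ⇑d + N).toNat) * ∏ k, t k ^ sfun ⇑d k) := by
    intro γ t
    rw [hG, map_sum]
    refine Finset.sum_congr rfl fun d hd => ?_
    rw [eval_monomial, Finsupp.prod_fintype _ _ (fun i => pow_zero _)]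
    have hcoe : ⇑(Finsupp.equivFunOnFinite.symm (E d)) = E d := rfl
    rw [hcoe, Fin.prod_univ_succ]
    simp only [hE, Fin.cons_zero, Fin.cons_succ]
  have key : ∀ x : Fin (l + 1) → ℂ, eval x (X 0 * G) = 0 := by
    intro x
    rw [map_mul, eval_X]
    rcases eq_or_ne (x 0) 0 with h0 | h0
    · rw [h0, zero_mul]
    · have hx : x = Fin.cons (x 0) (Fin.tail x) := (Fin.cons_self_tail x).symm
      have e1 : eval x G
          = (x 0) ^ (N : ℤ) * eval (glue (Fin.tail x) fun k => (x 0) ^ zk p q k * Fin.tail x k) f := by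
        conv_lhs => rw [hx]
        rw [hGx (x 0) (Fin.tail x), hyf (x 0) h0 (Fin.tail x), Finset.mul_sum]
        refine Finset.sum_congr rfl fun d hd => ?_
        rw [← zpow_natCast (x 0) ((Lfun p q ⇑d + N).toNat), Int.toNat_of_nonneg (hLN d hd),
          zpow_add₀ h0, zpow_natCast]
        ring
      rw [e1, hf _ (timeRev_glue p q h0 (Fin.tail x)), mul_zero, mul_zero]
  have hXG : (X 0 : MvPolynomial (Fin (l + 1)) ℂ) * G = 0 := by
    apply MvPolynomial.funext
    intro x
    rw [key x, map_zero]
  have hG0 : G = 0 := by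
    rcases mul_eq_zero.mp hXG with h | h
    · exact absurd h (X_ne_zero 0)
    · exact h
  have hcoeff : ∀ u : Fin (l + 1) → ℕ,
      ∑ d ∈ f.support.filter (fun d => E d = u), coeff d f = 0 := by
    intro u
    have h1 : coeff (Finsupp.equivFunOnFinite.symm u) G = 0 := by
      rw [hG0, coeff_zero]
    calc ∑ d ∈ f.support.filter (fun d => E d = u), coeff d f
        = ∑ d ∈ f.support, if E d = u then coeff d f else 0 := Finset.sum_filter _ _
      _ = coeff (Finsupp.equivFunOnFinite.symm u) G := by
          rw [hG, coeff_sum]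
          refine Finset.sum_congr rfl fun d hd => ?_
          rw [coeff_monomial]
          by_cases hEd : E d = u
          · rw [if_pos hEd, if_pos (by rw [hEd])]
          · rw [if_neg hEd, if_neg
              (fun hcon => hEd (Finsupp.equivFunOnFinite.symm.injective hcon))]
      _ = 0 := h1
  have hEiff : ∀ d ∈ f.support, ∀ d₀ ∈ f.support,
      (E d = E d₀ ↔ (sfun ⇑d = sfun ⇑d₀ ∧ Lfun p q ⇑d = Lfun p q ⇑d₀)) := by
    intro d hd d₀ hd₀
    constructor
    · intro h
      have hsucc : sfun ⇑d = sfun ⇑d₀ := funext fun k => by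
        have h2 := congrFun h k.succ
        simpa only [hE, Fin.cons_succ] using h2
      refine ⟨hsucc, ?_⟩
      have h0 := congrFun h 0
      simp only [hE, Fin.cons_zero] at h0
      have t1 := hLN d hd
      have t2 := hLN d₀ hd₀
      omega
    · rintro ⟨h1, h2⟩
      simp only [hE, h1, h2]
  rw [← Ideal.Quotient.eq_zero_iff_mem]
  conv_lhs => rw [f.as_sum]
  rw [map_sum]
  set κ : (Fin (2 * l) →₀ ℕ) → ((Fin l → ℕ) × ℤ) :=
    fun d => (sfun ⇑d, Lfun p q ⇑d) with hκ
  rw [← Finset.sum_fiberwise_of_maps_to (t := f.support.image κ)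
    (fun d hd => Finset.mem_image_of_mem κ hd)
    (fun d => (Ideal.Quotient.mk (sibirsky ℂ p q)) (monomial d (coeff d f)))]
  refine Finset.sum_eq_zero fun y hy => ?_
  obtain ⟨d₀, hd₀, hkd₀⟩ := Finset.mem_image.mp hy
  have hmon : ∀ d ∈ f.support.filter (fun d => κ d = y),
      (Ideal.Quotient.mk (sibirsky ℂ p q)) (monomial d (coeff d f))
        = (Ideal.Quotient.mk (sibirsky ℂ p q)) (C (coeff d f))
          * (Ideal.Quotient.mk (sibirsky ℂ p q)) (monX ⇑d₀) := by
    intro d hd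
    rw [Finset.mem_filter] at hd
    have hκd : κ d = κ d₀ := by rw [hd.2, ← hkd₀]
    have hmm : (Ideal.Quotient.mk (sibirsky ℂ p q)) (monX ⇑d)
        = (Ideal.Quotient.mk (sibirsky ℂ p q)) (monX ⇑d₀) := by
      rw [Ideal.Quotient.eq]
      exact binom_mem p q
        (fun k => congrFun (congrArg Prod.fst hκd) k)
        (congrArg Prod.snd hκd)
    rw [monomial_eq_C_mul_monX, map_mul, hmm]
  rw [Finset.sum_congr rfl hmon, ← Finset.sum_mul, ← map_sum, ← map_sum]
  have hsum0 : ∑ d ∈ f.support.filter (fun d => κ d = y), coeff d f = 0 := by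
    have hfe : f.support.filter (fun d => κ d = y)
        = f.support.filter (fun d => E d = E d₀) := by
      apply Finset.filter_congr
      intro d hd
      rw [hEiff d hd d₀ hd₀, ← hkd₀]
      exact Prod.ext_iff
    rw [hfe]
    exact hcoeff (E d₀)
  rw [hsum0, map_zero, map_zero, zero_mul]

end Stmt11Aux

theorem stmt11 {l : ℕ} (hl : 0 < l) (p : Fin l → ℤ) (q : Fin l → ℕ)
    (hp : ∀ k, -1 ≤ p k) (hpq : ∀ k, 0 ≤ p k + (q k : ℤ))
    (hdist : Function.Injective fun k => (p k, q k)) :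
    {x : Fin (2 * l) → ℂ | ∀ f : MvPolynomial (Fin (2 * l)) ℂ,
        (∀ y : Fin (2 * l) → ℂ, TimeRev p q y → eval y f = 0) → eval x f = 0} =
      {x : Fin (2 * l) → ℂ | ∀ f ∈ sibirsky ℂ p q, eval x f = 0} := by
  ext x
  simp only [Set.mem_setOf_eq]
  constructor
  · intro hx f hfI
    apply hx
    intro y hy
    have hle : sibirsky ℂ p q ≤ RingHom.ker (eval y) := by
      rw [sibirsky, Ideal.span_le]
      rintro g ⟨v, hv, rfl⟩
      simp only [SetLike.mem_coe, RingHom.mem_ker]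
      exact Stmt11Aux.gen_vanish p q hv hy
    exact hle hfI
  · intro hx f hf
    exact hx f (Stmt11Aux.mem_of_vanish p q f hf)
end
end

section
/- The variety V(I_S) ⊆ ℂ^{2ℓ} of the Sibirsky ideal is the Zariski closure of the union of all orbits of the group {U_η} that are invariant under the involution; equivalently, the closure in the Zariski topology of ℂ^{2ℓ} of the set {x ∈ ℂ^{2ℓ} : the orbit of x is invariant under the involution} equals V(I_S). -/
open MvPolynomial

noncomputable section

namespace Stmt18Aux

variable {l : ℕ} (p : Fin l → ℤ) (q : Fin l → ℕ)

@[simp] lemma val_aIdx (k : Fin l) : ((aIdx l k : Fin (2*l)) : ℕ) = k := rfl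
@[simp] lemma val_bIdx (k : Fin l) : ((bIdx l k : Fin (2*l)) : ℕ) = 2*l - 1 - k := rfl

lemma aIdx_lt (k : Fin l) : ((aIdx l k : Fin (2*l)) : ℕ) < l := k.isLt

lemma bIdx_not_lt (k : Fin l) : ¬ (((bIdx l k : Fin (2*l)) : ℕ) < l) := by
  have := k.isLt; simp only [val_bIdx]; omega

lemma rev_aIdx (k : Fin l) : (aIdx l k).rev = bIdx l k := by
  have := k.isLt
  ext; simp [Fin.val_rev, aIdx, bIdx]; omega

lemma rev_bIdx (k : Fin l) : (bIdx l k).rev = aIdx l k := by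
  have := k.isLt
  ext; simp [Fin.val_rev, aIdx, bIdx]; omega

lemma cases_idx (i : Fin (2*l)) : (∃ k, i = aIdx l k) ∨ (∃ k, i = bIdx l k) := by
  have hi := i.isLt
  by_cases h : (i : ℕ) < l
  · exact Or.inl ⟨⟨i, h⟩, by ext; simp [aIdx]⟩
  · exact Or.inr ⟨⟨2*l - 1 - i, by omega⟩, by ext; simp [bIdx]; omega⟩

/-- The equivalence `Fin l ⊕ Fin l ≃ Fin (2*l)` sending `inl k` to `aIdx`, `inr k` to `bIdx`. -/
def idxEquiv (l : ℕ) : (Fin l ⊕ Fin l) ≃ Fin (2*l) where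
  toFun := Sum.elim (aIdx l) (bIdx l)
  invFun i := if h : (i : ℕ) < l then .inl ⟨i, h⟩ else
    .inr ⟨2*l - 1 - i, by have := i.isLt; omega⟩
  left_inv := by
    rintro (k | k)
    · show (if h : ((aIdx l k : Fin (2*l)) : ℕ) < l then _ else _) = _
      rw [dif_pos (aIdx_lt k)]
      exact congrArg Sum.inl (Fin.ext rfl)
    · show (if h : ((bIdx l k : Fin (2*l)) : ℕ) < l then _ else _) = _
      rw [dif_neg (bIdx_not_lt k)]
      have := k.isLt
      congr 1
      apply Fin.ext
      show 2*l - 1 - ((bIdx l k : Fin (2*l)) : ℕ) = (k : ℕ)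
      rw [val_bIdx]; omega
  right_inv := by
    intro i
    have := i.isLt
    show Sum.elim (aIdx l) (bIdx l)
      (if h : (i : ℕ) < l then .inl ⟨i, h⟩ else .inr ⟨2*l - 1 - i, by have := i.isLt; omega⟩) = i
    by_cases h : (i : ℕ) < l
    · rw [dif_pos h, Sum.elim_inl]; exact Fin.ext rfl
    · rw [dif_neg h, Sum.elim_inr]
      apply Fin.ext
      show 2*l - 1 - (2*l - 1 - (i : ℕ)) = (i : ℕ)
      omega

lemma prod_split {M : Type*} [CommMonoid M] (g : Fin (2*l) → M) :
    ∏ i, g i = (∏ k, g (aIdx l k)) * ∏ k, g (bIdx l k) := by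
  rw [← Fintype.prod_equiv (idxEquiv l) (fun x => g (idxEquiv l x)) g (fun x => rfl),
    Fintype.prod_sum_type]
  rfl

lemma sum_split {M : Type*} [AddCommMonoid M] (g : Fin (2*l) → M) :
    ∑ i, g i = (∑ k, g (aIdx l k)) + ∑ k, g (bIdx l k) := by
  rw [← Fintype.sum_equiv (idxEquiv l) (fun x => g (idxEquiv l x)) g (fun x => rfl),
    Fintype.sum_sum_type]
  rfl

@[simp] lemma revVec_aIdx {α : Type*} (v : Fin (2*l) → α) (k : Fin l) :
    revVec v (aIdx l k) = v (bIdx l k) := by rw [revVec, rev_aIdx]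

@[simp] lemma revVec_bIdx {α : Type*} (v : Fin (2*l) → α) (k : Fin l) :
    revVec v (bIdx l k) = v (aIdx l k) := by rw [revVec, rev_bIdx]

lemma zeta_aIdx (k : Fin l) : zeta p q (aIdx l k) = p k - q k := by
  rw [zeta, dif_pos (aIdx_lt k)]; rfl

lemma zeta_bIdx (k : Fin l) : zeta p q (bIdx l k) = (q k : ℤ) - p k := by
  have hk := k.isLt
  rw [zeta, dif_neg (bIdx_not_lt k)]
  have h1 : ∀ (h : 2*l - 1 - ((bIdx l k : Fin (2*l)) : ℕ) < l),
      (⟨2*l - 1 - ((bIdx l k : Fin (2*l)) : ℕ), h⟩ : Fin l) = k := by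
    intro h
    apply Fin.ext
    show 2*l - 1 - ((bIdx l k : Fin (2*l)) : ℕ) = (k : ℕ)
    rw [val_bIdx]; omega
  rw [h1]

end Stmt18Aux
namespace Stmt18Aux

variable {l : ℕ} (p : Fin l → ℤ) (q : Fin l → ℕ)

/-- `L(ν) = ∑ (p_k - q_k) ν_{b,k}`, the `γ`-degree of the monomial `[ν]` under the
parametrization. -/
def Ldeg (v : Fin (2*l) → ℕ) : ℤ := ∑ k, (p k - (q k : ℤ)) * v (bIdx l k)

/-- `σ(ν)_k = ν_{a,k} + ν_{b,k}`. -/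
def sVec (v : Fin (2*l) → ℕ) : Fin l → ℕ := fun k => v (aIdx l k) + v (bIdx l k)

lemma zdot_zeta_eq (v : Fin (2*l) → ℕ) :
    zdot (zeta p q) v =
      ∑ k, (p k - (q k : ℤ)) * ((v (aIdx l k) : ℤ) - (v (bIdx l k) : ℤ)) := by
  rw [zdot, sum_split (fun i => zeta p q i * (v i : ℤ))]
  simp only [zeta_aIdx, zeta_bIdx]
  rw [← Finset.sum_add_distrib]
  exact Finset.sum_congr rfl fun k _ => by ring

@[simp] lemma Ueta_aIdx {K : Type*} [Field K] (η : K) (x : Fin (2*l) → K) (k : Fin l) :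
    Ueta p q η x (aIdx l k) = η ^ ((q k : ℤ) - p k) * x (aIdx l k) := by
  rw [Ueta, dif_pos (aIdx_lt k)]; rfl

@[simp] lemma Ueta_bIdx {K : Type*} [Field K] (η : K) (x : Fin (2*l) → K) (k : Fin l) :
    Ueta p q η x (bIdx l k) = η ^ (p k - (q k : ℤ)) * x (bIdx l k) := by
  rw [Ueta, dif_neg (bIdx_not_lt k)]
  have h1 : ∀ (h : 2*l - 1 - ((bIdx l k : Fin (2*l)) : ℕ) < l),
      (⟨2*l - 1 - ((bIdx l k : Fin (2*l)) : ℕ), h⟩ : Fin l) = k := by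
    intro h
    apply Fin.ext
    show 2*l - 1 - ((bIdx l k : Fin (2*l)) : ℕ) = (k : ℕ)
    rw [val_bIdx]; omega
  rw [h1]

lemma Ueta_apply {K : Type*} [Field K] (η : K) (x : Fin (2*l) → K) (i : Fin (2*l)) :
    Ueta p q η x i = η ^ (-(zeta p q i)) * x i := by
  rcases cases_idx i with ⟨k, rfl⟩ | ⟨k, rfl⟩
  · rw [Ueta_aIdx, zeta_aIdx, neg_sub]
  · rw [Ueta_bIdx, zeta_bIdx, neg_sub]

lemma Ueta_one {K : Type*} [Field K] (x : Fin (2*l) → K) : Ueta p q 1 x = x := by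
  funext i; rw [Ueta_apply, one_zpow, one_mul]

lemma Ueta_Ueta {K : Type*} [Field K] (η δ : K) (x : Fin (2*l) → K) :
    Ueta p q η (Ueta p q δ x) = Ueta p q (η * δ) x := by
  funext i
  rw [Ueta_apply, Ueta_apply, Ueta_apply, mul_zpow, mul_assoc]

lemma revVec_Ueta {K : Type*} [Field K] (η : K) (y : Fin (2*l) → K) :
    revVec (Ueta p q η y) = Ueta p q η⁻¹ (revVec y) := by
  funext i
  rcases cases_idx i with ⟨k, rfl⟩ | ⟨k, rfl⟩
  · rw [revVec_aIdx, Ueta_bIdx, Ueta_aIdx, revVec_aIdx, inv_zpow', neg_sub]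
  · rw [revVec_bIdx, Ueta_aIdx, Ueta_bIdx, revVec_bIdx, inv_zpow', neg_sub]

lemma timeRev_revVec {K : Type*} [Field K] {y : Fin (2*l) → K} {γ : K} (hγ : γ ≠ 0)
    (h : ∀ k : Fin l, y (bIdx l k) = γ ^ (p k - (q k : ℤ)) * y (aIdx l k)) :
    revVec y = Ueta p q γ⁻¹ y := by
  funext i
  rcases cases_idx i with ⟨k, rfl⟩ | ⟨k, rfl⟩
  · rw [revVec_aIdx, Ueta_aIdx, inv_zpow', neg_sub, h k]
  · rw [revVec_bIdx, Ueta_bIdx, inv_zpow', neg_sub, h k, ← mul_assoc,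
      ← zpow_add₀ hγ]
    rw [show (q k : ℤ) - p k + (p k - q k) = 0 by ring, zpow_zero, one_mul]

/-- Points satisfying `TimeRev` have involution-invariant orbits. -/
lemma timeRev_invariant {K : Type*} [Field K] {y : Fin (2*l) → K}
    (h : TimeRev p q y) : ∀ z ∈ orbitU p q y, revVec z ∈ orbitU p q y := by
  obtain ⟨γ, hγ, hb⟩ := h
  rintro z ⟨η, hη, rfl⟩
  refine ⟨η⁻¹ * γ⁻¹, by simp [hη, hγ], ?_⟩
  rw [revVec_Ueta, timeRev_revVec p q hγ hb, Ueta_Ueta]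

end Stmt18Aux
namespace Stmt18Aux

variable {l : ℕ} (p : Fin l → ℤ) (q : Fin l → ℕ)

lemma monX_add {K : Type*} [CommSemiring K] {n : ℕ} (u v : Fin n → ℕ) :
    (monX (fun i => u i + v i) : MvPolynomial (Fin n) K) = monX u * monX v := by
  rw [monX, monX, monX, ← Finset.prod_mul_distrib]
  exact Finset.prod_congr rfl fun i _ => pow_add _ _ _

lemma eval_monX {K : Type*} [CommSemiring K] {n : ℕ} (y : Fin n → K) (v : Fin n → ℕ) :
    eval y (monX v) = ∏ i, y i ^ v i := by
  rw [monX]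
  simp

lemma monX_eq_monomial {K : Type*} [CommSemiring K] {n : ℕ} (v : Fin n → ℕ) :
    (monX v : MvPolynomial (Fin n) K) =
      monomial (Finsupp.equivFunOnFinite.symm v) 1 := by
  rw [← prod_X_pow_eq_monomial, monX]
  rw [← Finset.prod_subset (Finset.subset_univ (Finsupp.equivFunOnFinite.symm v).support)]
  · exact Finset.prod_congr rfl fun i _ => rfl
  · intro i _ hi
    have : v i = 0 := by
      exact Finsupp.notMem_support_iff.mp hi
    rw [this, pow_zero]

lemma coeff_monX {K : Type*} [CommSemiring K] {n : ℕ} (m : Fin n →₀ ℕ) (v : Fin n → ℕ) :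
    coeff m (monX v : MvPolynomial (Fin n) K) =
      if Finsupp.equivFunOnFinite.symm v = m then 1 else 0 := by
  rw [monX_eq_monomial, coeff_monomial]

lemma monomial_eq_monX {K : Type*} [CommSemiring K] {n : ℕ} (d : Fin n →₀ ℕ) (c : K) :
    monomial d c = C c * monX (⇑d) := by
  rw [monX_eq_monomial, Finsupp.equivFunOnFinite_symm_coe, C_mul_monomial, mul_one]

/-- The membership generator. -/
lemma gen_mem (v : Fin (2*l) → ℕ) (h : zdot (zeta p q) v = 0) :
    (monX v - monX (revVec v) : MvPolynomial (Fin (2*l)) ℂ) ∈ sibirsky ℂ p q :=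
  Ideal.subset_span ⟨v, h, rfl⟩

/-- The vector `w` with `w_{a,k} = (ν_{a,k} - μ_{a,k})⁺`, `w_{b,k} = (μ_{a,k} - ν_{a,k})⁺`. -/
def wVec (ν μ : Fin (2*l) → ℕ) : Fin (2*l) → ℕ := fun i =>
  if (i : ℕ) < l then ((ν i : ℤ) - μ i).toNat else ((μ i.rev : ℤ) - ν i.rev).toNat

lemma wVec_aIdx (ν μ : Fin (2*l) → ℕ) (k : Fin l) :
    wVec ν μ (aIdx l k) = ((ν (aIdx l k) : ℤ) - μ (aIdx l k)).toNat := by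
  rw [wVec, if_pos (aIdx_lt k)]

lemma wVec_bIdx (ν μ : Fin (2*l) → ℕ) (k : Fin l) :
    wVec ν μ (bIdx l k) = ((μ (aIdx l k) : ℤ) - ν (aIdx l k)).toNat := by
  rw [wVec, if_neg (bIdx_not_lt k), rev_bIdx]

/-- Key combinatorial lemma: monomials with the same class differ by an element of the
Sibirsky ideal. -/
lemma monX_sub_mem (ν μ : Fin (2*l) → ℕ) (hL : Ldeg p q ν = Ldeg p q μ)
    (hs : sVec ν = sVec μ) :
    (monX ν - monX μ : MvPolynomial (Fin (2*l)) ℂ) ∈ sibirsky ℂ p q := by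
  set w := wVec ν μ with hw
  have hsk : ∀ k : Fin l, ν (aIdx l k) + ν (bIdx l k) = μ (aIdx l k) + μ (bIdx l k) :=
    fun k => congrFun hs k
  have hzd : zdot (zeta p q) w = 0 := by
    rw [zdot_zeta_eq]
    have : ∀ k : Fin l,
        (p k - (q k : ℤ)) * ((w (aIdx l k) : ℤ) - (w (bIdx l k) : ℤ)) =
          (p k - (q k : ℤ)) * (μ (bIdx l k) : ℤ) - (p k - (q k : ℤ)) * (ν (bIdx l k) : ℤ) := by
      intro k
      have h1 := hsk k
      rw [hw, wVec_aIdx, wVec_bIdx]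
      have h2 : ((((ν (aIdx l k) : ℤ) - μ (aIdx l k)).toNat : ℤ) -
          (((μ (aIdx l k) : ℤ) - ν (aIdx l k)).toNat : ℤ)) =
          (μ (bIdx l k) : ℤ) - (ν (bIdx l k) : ℤ) := by omega
      rw [h2]; ring
    rw [Finset.sum_congr rfl fun k _ => this k, Finset.sum_sub_distrib]
    have : Ldeg p q μ - Ldeg p q ν = 0 := by rw [hL]; ring
    rw [← Ldeg, ← Ldeg, this]
  set m : Fin (2*l) → ℕ := fun i => ν i - w i with hm
  have hν : ν = fun i => m i + w i := by
    funext i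
    rcases cases_idx i with ⟨k, rfl⟩ | ⟨k, rfl⟩
    · rw [hm]; simp only [hw, wVec_aIdx]; omega
    · rw [hm]; simp only [hw, wVec_bIdx]
      have := hsk k; omega
  have hμ : μ = fun i => m i + revVec w i := by
    funext i
    rcases cases_idx i with ⟨k, rfl⟩ | ⟨k, rfl⟩
    · rw [hm]; simp only [revVec_aIdx, hw, wVec_aIdx, wVec_bIdx]; omega
    · rw [hm]; simp only [revVec_bIdx, hw, wVec_aIdx, wVec_bIdx]
      have := hsk k; omega
  have key : (monX ν - monX μ : MvPolynomial (Fin (2*l)) ℂ) =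
      monX m * (monX w - monX (revVec w)) := by
    rw [hν, hμ, monX_add, monX_add, mul_sub]
  rw [key]
  exact Ideal.mul_mem_left _ _ (gen_mem p q w hzd)

end Stmt18Aux
namespace Stmt18Aux

variable {l : ℕ} (p : Fin l → ℤ) (q : Fin l → ℕ)

lemma prod_zpow_s {K : Type*} [Field K] {η : K} (hη : η ≠ 0) {ι : Type*}
    (s : Finset ι) (f : ι → ℤ) : ∏ i ∈ s, η ^ f i = η ^ (∑ i ∈ s, f i) := by
  classical
  induction s using Finset.induction with
  | empty => simp
  | insert _ _ h ih => rw [Finset.prod_insert h, Finset.sum_insert h, zpow_add₀ hη, ih]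

lemma zpow_pow {K : Type*} [Field K] {η : K} (hη : η ≠ 0) (z : ℤ) (n : ℕ) :
    (η ^ z) ^ n = η ^ (z * n) := by
  induction n with
  | zero => simp
  | succ n ih =>
      rw [pow_succ, ih, ← zpow_add₀ hη]
      congr 1
      push_cast
      ring

lemma eval_monX_Ueta {η : ℂ} (hη : η ≠ 0) (y : Fin (2*l) → ℂ) (v : Fin (2*l) → ℕ) :
    eval (Ueta p q η y) (monX v) = η ^ (-(zdot (zeta p q) v)) * eval y (monX v) := by
  rw [eval_monX, eval_monX]
  calc ∏ i, (Ueta p q η y i) ^ v i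
      = ∏ i, (η ^ (-(zeta p q i) * (v i : ℤ)) * y i ^ v i) := by
        refine Finset.prod_congr rfl fun i _ => ?_
        rw [Ueta_apply, mul_pow, zpow_pow hη]
    _ = (∏ i, η ^ (-(zeta p q i) * (v i : ℤ))) * ∏ i, y i ^ v i :=
        Finset.prod_mul_distrib
    _ = η ^ (-(zdot (zeta p q) v)) * ∏ i, y i ^ v i := by
        rw [prod_zpow_s hη]
        congr 2
        rw [zdot, ← Finset.sum_neg_distrib]
        exact Finset.sum_congr rfl fun i _ => neg_mul _ _
  
lemma eval_monX_rev (y : Fin (2*l) → ℂ) (v : Fin (2*l) → ℕ) :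
    eval y (monX (revVec v)) = eval (revVec y) (monX v) := by
  rw [eval_monX, eval_monX]
  exact Fintype.prod_equiv Fin.revPerm (fun i => y i ^ (revVec v) i)
    (fun i => (revVec y) i ^ v i) (fun i => by simp [revVec, Fin.rev_rev])

/-- Any element of the Sibirsky ideal vanishes at points with involution-invariant orbit. -/
lemma eval_zero_of_good {y : Fin (2*l) → ℂ}
    (hy : ∀ z ∈ orbitU p q y, revVec z ∈ orbitU p q y)
    {f : MvPolynomial (Fin (2*l)) ℂ} (hf : f ∈ sibirsky ℂ p q) :
    eval y f = 0 := by
  obtain ⟨η, hη, hrev⟩ := hy y ⟨1, one_ne_zero, (Ueta_one p q y).symm⟩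
  have hle : sibirsky ℂ p q ≤ RingHom.ker (eval y) := by
    rw [sibirsky]
    apply Ideal.span_le.mpr
    rintro g ⟨v, hv, rfl⟩
    rw [SetLike.mem_coe, RingHom.mem_ker, map_sub]
    have h2 : eval y (monX (revVec v)) = eval y (monX v) := by
      rw [eval_monX_rev, hrev, eval_monX_Ueta p q hη, hv, neg_zero, zpow_zero, one_mul]
    rw [h2, sub_self]
  exact RingHom.mem_ker.mp (hle hf)

/-- The parametrization `(γ, a) ↦ (a, γ^{p-q}·a)`. -/
def param (γ : ℂ) (a : Fin l → ℂ) : Fin (2*l) → ℂ := fun i =>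
  if h : (i : ℕ) < l then a ⟨i, h⟩ else
    γ ^ (p ⟨2*l - 1 - (i : ℕ), by have := i.isLt; omega⟩ -
      (q ⟨2*l - 1 - (i : ℕ), by have := i.isLt; omega⟩ : ℤ)) *
      a ⟨2*l - 1 - (i : ℕ), by have := i.isLt; omega⟩

@[simp] lemma param_aIdx (γ : ℂ) (a : Fin l → ℂ) (k : Fin l) :
    param p q γ a (aIdx l k) = a k := by
  rw [param, dif_pos (aIdx_lt k)]; rfl

@[simp] lemma param_bIdx (γ : ℂ) (a : Fin l → ℂ) (k : Fin l) :
    param p q γ a (bIdx l k) = γ ^ (p k - (q k : ℤ)) * a k := by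
  rw [param, dif_neg (bIdx_not_lt k)]
  have h1 : ∀ (h : 2*l - 1 - ((bIdx l k : Fin (2*l)) : ℕ) < l),
      (⟨2*l - 1 - ((bIdx l k : Fin (2*l)) : ℕ), h⟩ : Fin l) = k := by
    intro h
    apply Fin.ext
    show 2*l - 1 - ((bIdx l k : Fin (2*l)) : ℕ) = (k : ℕ)
    rw [val_bIdx]; omega
  rw [h1]

lemma param_timeRev {γ : ℂ} (hγ : γ ≠ 0) (a : Fin l → ℂ) :
    TimeRev p q (param p q γ a) :=
  ⟨γ, hγ, fun k => by rw [param_bIdx, param_aIdx]⟩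

lemma eval_monX_param {γ : ℂ} (hγ : γ ≠ 0) (a : Fin l → ℂ) (v : Fin (2*l) → ℕ) :
    eval (param p q γ a) (monX v) =
      γ ^ Ldeg p q v * ∏ k, a k ^ sVec v k := by
  rw [eval_monX, prod_split (fun i => param p q γ a i ^ v i)]
  simp only [param_aIdx, param_bIdx]
  have h1 : ∀ k ∈ (Finset.univ : Finset (Fin l)),
      (γ ^ (p k - (q k : ℤ)) * a k) ^ v (bIdx l k) =
        γ ^ ((p k - (q k : ℤ)) * (v (bIdx l k) : ℤ)) * a k ^ v (bIdx l k) :=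
    fun k _ => by rw [mul_pow, zpow_pow hγ]
  rw [Finset.prod_congr rfl h1, Finset.prod_mul_distrib, prod_zpow_s hγ, ← Ldeg]
  rw [show (∏ k, a k ^ sVec v k) = ∏ k, (a k ^ v (aIdx l k) * a k ^ v (bIdx l k)) from
    Finset.prod_congr rfl fun k _ => by rw [sVec, pow_add], Finset.prod_mul_distrib]
  ring

lemma eval_eq_sum_monX {K : Type*} [CommSemiring K] {n : ℕ} (y : Fin n → K)
    (f : MvPolynomial (Fin n) K) :
    eval y f = ∑ d ∈ f.support, coeff d f * eval y (monX ⇑d) := by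
  rw [eval_eq']
  exact Finset.sum_congr rfl fun d _ => by rw [eval_monX]

end Stmt18Aux
namespace Stmt18Aux

variable {l : ℕ} (p : Fin l → ℤ) (q : Fin l → ℕ)

/-- The key lemma: a polynomial vanishing on all time-reversible parametrized points
belongs to the Sibirsky ideal. -/
lemma mem_sibirsky_of_vanish (f : MvPolynomial (Fin (2*l)) ℂ)
    (hT : ∀ γ : ℂ, γ ≠ 0 → ∀ a : Fin l → ℂ, eval (param p q γ a) f = 0) :
    f ∈ sibirsky ℂ p q := by
  classical
  set s := f.support with hs
  set N : ℕ := s.sup fun d => (Ldeg p q ⇑d).natAbs with hN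
  have hLN : ∀ d ∈ s, 0 ≤ Ldeg p q ⇑d + N := by
    intro d hd
    have h5 : (Ldeg p q ⇑d).natAbs ≤ N :=
      Finset.le_sup (f := fun d : Fin (2*l) →₀ ℕ => (Ldeg p q ⇑d).natAbs) hd
    omega
  set eV : (Fin (2*l) →₀ ℕ) → (Fin (l+1) → ℕ) :=
    fun d => Fin.cons ((Ldeg p q ⇑d + N).toNat) (sVec ⇑d) with heV
  set P : MvPolynomial (Fin (l+1)) ℂ :=
    ∑ d ∈ s, C (coeff d f) * monX (eV d) with hP
  have hevalP : ∀ v : Fin (l+1) → ℂ, v 0 ≠ 0 →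
      eval v P = v 0 ^ N * eval (param p q (v 0) (fun k => v k.succ)) f := by
    intro v h0
    rw [hP, map_sum, eval_eq_sum_monX, Finset.mul_sum]
    refine Finset.sum_congr rfl fun d hd => ?_
    rw [map_mul, eval_C, eval_monX, eval_monX_param p q h0, Fin.prod_univ_succ]
    simp only [heV, Fin.cons_zero, Fin.cons_succ]
    have hpow : (v 0) ^ ((Ldeg p q ⇑d + N).toNat) =
        (v 0) ^ (Ldeg p q ⇑d) * (v 0) ^ (N : ℕ) := by
      rw [← zpow_natCast (v 0) ((Ldeg p q ⇑d + N).toNat),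
        Int.toNat_of_nonneg (hLN d hd), zpow_add₀ h0, zpow_natCast]
    rw [hpow]
    ring
  have hP0 : P = 0 := by
    have hX : (X 0 : MvPolynomial (Fin (l+1)) ℂ) * P = 0 := by
      apply MvPolynomial.funext
      intro v
      rw [map_mul, eval_X, map_zero]
      by_cases h0 : v 0 = 0
      · rw [h0, zero_mul]
      · rw [hevalP v h0, hT (v 0) h0 _, mul_zero, mul_zero]
    rcases mul_eq_zero.mp hX with h | h
    · exact absurd h (X_ne_zero 0)
    · exact h
  have hcoe : ∀ d₀ ∈ s,
      ∑ d ∈ s.filter (fun d : Fin (2*l) →₀ ℕ =>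
        (Ldeg p q ⇑d, sVec ⇑d) = (Ldeg p q ⇑d₀, sVec ⇑d₀)), coeff d f = 0 := by
    intro d₀ hd₀
    have h1 : coeff (Finsupp.equivFunOnFinite.symm (eV d₀)) P = 0 := by
      rw [hP0, coeff_zero]
    rw [hP, coeff_sum] at h1
    have h2 : ∀ d ∈ s,
        coeff (Finsupp.equivFunOnFinite.symm (eV d₀)) (C (coeff d f) * monX (eV d)) =
          if (Ldeg p q ⇑d, sVec ⇑d) = (Ldeg p q ⇑d₀, sVec ⇑d₀) then coeff d f else 0 := by
      intro d hd
      rw [coeff_C_mul, coeff_monX]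
      have hiff : (eV d = eV d₀) ↔
          ((Ldeg p q ⇑d, sVec ⇑d) = (Ldeg p q ⇑d₀, sVec ⇑d₀)) := by
        rw [heV]
        simp only [Fin.cons_inj, Prod.mk.injEq]
        constructor
        · rintro ⟨ha, hb⟩
          refine ⟨?_, hb⟩
          have h3 := hLN d hd
          have h4 := hLN d₀ hd₀
          omega
        · rintro ⟨ha, hb⟩
          exact ⟨by rw [ha], hb⟩
      have hiff2 : (Finsupp.equivFunOnFinite.symm (eV d) =
          Finsupp.equivFunOnFinite.symm (eV d₀)) ↔
          ((Ldeg p q ⇑d, sVec ⇑d) = (Ldeg p q ⇑d₀, sVec ⇑d₀)) :=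
        (Equiv.apply_eq_iff_eq _).trans hiff
      by_cases hcond : (Ldeg p q ⇑d, sVec ⇑d) = (Ldeg p q ⇑d₀, sVec ⇑d₀)
      · rw [if_pos (hiff2.mpr hcond), if_pos hcond, mul_one]
      · rw [if_neg (fun hc => hcond (hiff2.mp hc)), if_neg hcond, mul_zero]
    rw [Finset.sum_congr rfl h2, ← Finset.sum_filter] at h1
    exact h1
  -- choice of class representatives
  set rep : ℤ × (Fin l → ℕ) → (Fin (2*l) → ℕ) := fun z =>
    if h : ∃ v : Fin (2*l) → ℕ, (Ldeg p q v, sVec v) = z then h.choose else 0 with hrep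
  have hrepspec : ∀ v : Fin (2*l) → ℕ,
      (Ldeg p q (rep (Ldeg p q v, sVec v)), sVec (rep (Ldeg p q v, sVec v))) =
        (Ldeg p q v, sVec v) := by
    intro v
    rw [hrep]
    simp only [dif_pos (⟨v, rfl⟩ : ∃ w : Fin (2*l) → ℕ,
      (Ldeg p q w, sVec w) = (Ldeg p q v, sVec v))]
    exact (⟨v, rfl⟩ : ∃ w : Fin (2*l) → ℕ,
      (Ldeg p q w, sVec w) = (Ldeg p q v, sVec v)).choose_spec
  have hsum : f = ∑ d ∈ s, C (coeff d f) * monX ⇑d := by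
    conv_lhs => rw [← support_sum_monomial_coeff f]
    exact Finset.sum_congr rfl fun d _ => monomial_eq_monX d _
  have hdecomp :
      (∑ d ∈ s, C (coeff d f) * (monX ⇑d - monX (rep (Ldeg p q ⇑d, sVec ⇑d))))
        + (∑ d ∈ s, C (coeff d f) * monX (rep (Ldeg p q ⇑d, sVec ⇑d))) = f := by
    rw [← Finset.sum_add_distrib]
    conv_rhs => rw [hsum]
    exact Finset.sum_congr rfl fun d _ => by ring
  have hmem1 : (∑ d ∈ s, C (coeff d f) *
      (monX ⇑d - monX (rep (Ldeg p q ⇑d, sVec ⇑d)))) ∈ sibirsky ℂ p q := by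
    apply Ideal.sum_mem
    intro d _
    apply Ideal.mul_mem_left
    have hspec := hrepspec ⇑d
    rw [Prod.mk.injEq] at hspec
    exact monX_sub_mem p q ⇑d _ hspec.1.symm hspec.2.symm
  have hzero : (∑ d ∈ s, C (coeff d f) * monX (rep (Ldeg p q ⇑d, sVec ⇑d))) = 0 := by
    rw [← Finset.sum_fiberwise_of_maps_to
      (g := fun d : Fin (2*l) →₀ ℕ => (Ldeg p q ⇑d, sVec ⇑d))
      (t := s.image fun d : Fin (2*l) →₀ ℕ => (Ldeg p q ⇑d, sVec ⇑d))
      (fun d hd => Finset.mem_image_of_mem _ hd)]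
    apply Finset.sum_eq_zero
    intro z hz
    obtain ⟨d₀, hd₀, hz0⟩ := Finset.mem_image.mp hz
    subst hz0
    have hcg : ∀ d ∈ s.filter (fun d : Fin (2*l) →₀ ℕ =>
        (Ldeg p q ⇑d, sVec ⇑d) = (Ldeg p q ⇑d₀, sVec ⇑d₀)),
        C (coeff d f) * monX (rep (Ldeg p q ⇑d, sVec ⇑d)) =
          C (coeff d f) * monX (rep (Ldeg p q ⇑d₀, sVec ⇑d₀)) := by
      intro d hd
      rw [(Finset.mem_filter.mp hd).2]
    rw [Finset.sum_congr rfl hcg, ← Finset.sum_mul, ← map_sum, hcoe d₀ hd₀,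
      map_zero, zero_mul]
  rw [← hdecomp, hzero, add_zero]
  exact hmem1

end Stmt18Aux
theorem stmt18 {l : ℕ} (hl : 0 < l) (p : Fin l → ℤ) (q : Fin l → ℕ)
    (hp : ∀ k, -1 ≤ p k) (hpq : ∀ k, 0 ≤ p k + (q k : ℤ))
    (hdist : Function.Injective fun k => (p k, q k)) :
    {x : Fin (2 * l) → ℂ | ∀ f : MvPolynomial (Fin (2 * l)) ℂ,
        (∀ y : Fin (2 * l) → ℂ,
          (∀ z ∈ orbitU p q y, revVec z ∈ orbitU p q y) → eval y f = 0) →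
          eval x f = 0} =
      {x : Fin (2 * l) → ℂ | ∀ f ∈ sibirsky ℂ p q, eval x f = 0} := by
  ext x
  simp only [Set.mem_setOf_eq]
  constructor
  · intro hx f hf
    exact hx f fun y hy => Stmt18Aux.eval_zero_of_good p q hy hf
  · intro hx f hf
    have hT : ∀ γ : ℂ, γ ≠ 0 → ∀ a : Fin l → ℂ,
        eval (Stmt18Aux.param p q γ a) f = 0 := fun γ hγ a =>
      hf _ (Stmt18Aux.timeRev_invariant p q (Stmt18Aux.param_timeRev p q hγ a))
    exact hx f (Stmt18Aux.mem_sibirsky_of_vanish p q f hT)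
end
end
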